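/- arXiv:2212.12962 — 5 statements merged into one kernel-verified Lean document; each statement's English description precedes it below -/
import Mathlib

section
/- Let f be an affine permutation of period n, and let C ⊆ ℤ be a nonempty, n-periodic, f-closed set (i.e., i ∈ C iff i+n ∈ C, and i ∈ C iff f(i) ∈ C). Then the restriction f|_C, defined as r_C ∘ f ∘ r_C⁻¹ where r_C : C → ℤ is the unique order-preserving bijection sending min(C ∩ [1,n]) to 1, is an affine permutation of period #(C ∩ [1,n]). -/
/-- An affine permutation of period `n`: a bijection `f : ℤ → ℤ` with `f (i + n) = f i + n`. -/
def IsAffinePerm (n : ℕ) (f : ℤ → ℤ) : Prop :=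
  Function.Bijective f ∧ ∀ i : ℤ, f (i + n) = f i + n

/-- A set `C ⊆ ℤ` is nonempty, `n`-periodic and `f`-closed. -/
def IsClosedSet (n : ℕ) (f : ℤ → ℤ) (C : Set ℤ) : Prop :=
  C.Nonempty ∧ (∀ i : ℤ, i ∈ C ↔ i + n ∈ C) ∧ (∀ i : ℤ, i ∈ C ↔ f i ∈ C)

/-- A cycle of `f`: a minimal (by inclusion) nonempty `n`-periodic `f`-closed set. -/
def IsCycleOf (n : ℕ) (f : ℤ → ℤ) (C : Set ℤ) : Prop :=
  IsClosedSet n f C ∧ ∀ C' ⊆ C, IsClosedSet n f C' → C' = C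

/-- `n_f(C) = #(C ∩ {1,…,n})`. -/
noncomputable def nOf (n : ℕ) (C : Set ℤ) : ℕ :=
  (C ∩ Set.Icc (1 : ℤ) (n : ℤ)).ncard

/-- The restriction of an affine permutation `f` to a nonempty `n`-periodic `f`-closed set
`C`, reindexed through the order-preserving bijection `r : C → ℤ` sending the least element
of `C ∩ {1,…,n}` to `1`, is an affine permutation of period `#(C ∩ {1,…,n})`. -/
theorem stmt_5 (n : ℕ) (hn : 1 ≤ n) (f : ℤ → ℤ) (hf : IsAffinePerm n f)
    (C : Set ℤ) (hC : IsClosedSet n f C)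
    (r : ℤ → ℤ) (hmono : StrictMonoOn r C) (hbij : Set.BijOn r C Set.univ)
    (i0 : ℤ) (hi0 : i0 ∈ C ∩ Set.Icc (1 : ℤ) (n : ℤ))
    (hmin : ∀ j ∈ C ∩ Set.Icc (1 : ℤ) (n : ℤ), i0 ≤ j)
    (hri0 : r i0 = 1)
    (g : ℤ → ℤ) (hg : ∀ i ∈ C, g (r i) = r (f i)) :
    IsAffinePerm (nOf n C) g := by
  obtain ⟨hne, hper, hclosed⟩ := hC
  obtain ⟨⟨finj, fsurj⟩, hfn⟩ := hf
  have hn0 : (0 : ℤ) < (n : ℤ) := by exact_mod_cast hn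
  -- periodicity for arbitrary integer multiples of n
  have hper' : ∀ x : ℤ, ∀ k : ℤ, x ∈ C ↔ x + k * n ∈ C := by
    intro x k
    induction k using Int.induction_on with
    | zero => simp
    | succ k ih =>
      have h2 : x + ((k : ℤ) + 1) * n = x + k * n + n := by ring
      rw [h2, ← hper]; exact ih
    | pred k ih =>
      have h1 := hper (x + (-(k : ℤ) - 1) * n)
      have h2 : x + (-(k : ℤ) - 1) * n + n = x + (-(k : ℤ)) * n := by ring
      rw [h2] at h1
      exact ih.trans h1.symm
  -- the reduction map ψ into {1,…,n}
  set ψ : ℤ → ℤ := fun x => (x - 1) % (n : ℤ) + 1 with hψ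
  have hψmem : ∀ x : ℤ, ψ x ∈ Set.Icc (1 : ℤ) (n : ℤ) := by
    intro x
    have h1 := Int.emod_nonneg (x - 1) (by positivity : (n : ℤ) ≠ 0)
    have h2 := Int.emod_lt_of_pos (x - 1) hn0
    simp only [hψ, Set.mem_Icc]; omega
  have hψdvd : ∀ x : ℤ, ∃ q : ℤ, x = ψ x + q * n := by
    intro x
    refine ⟨(x - 1) / n, ?_⟩
    have := Int.emod_add_mul_ediv (x - 1) (n : ℤ)
    simp only [hψ]; linarith [this]
  have hψC : ∀ x : ℤ, (x ∈ C ↔ ψ x ∈ C) := by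
    intro x
    obtain ⟨q, hq⟩ := hψdvd x
    have h := hper' (ψ x) q
    rw [← hq] at h; exact h.symm
  -- counting: for every i, #(C ∩ (i, i+n]) = nOf n C
  have hcount : ∀ i : ℤ, (C ∩ Set.Ioc i (i + n)).ncard = nOf n C := by
    intro i
    have hinj : Set.InjOn ψ (C ∩ Set.Ioc i (i + n)) := by
      rintro x ⟨-, hx1, hx2⟩ y ⟨-, hy1, hy2⟩ hxy
      obtain ⟨qx, hqx⟩ := hψdvd x
      obtain ⟨qy, hqy⟩ := hψdvd y
      have hsub : x - y = (qx - qy) * n := by rw [hqx, hqy, hxy]; ring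
      have hd1 : qx - qy < 1 := by
        have : (qx - qy) * (n : ℤ) < 1 * n := by rw [← hsub]; linarith
        exact lt_of_mul_lt_mul_right this (le_of_lt hn0)
      have hd2 : -1 < qx - qy := by
        have : (-1 : ℤ) * n < (qx - qy) * n := by rw [← hsub]; linarith
        exact lt_of_mul_lt_mul_right this (le_of_lt hn0)
      have : qx = qy := by omega
      rw [hqx, hqy, hxy, this]
    have himg : ψ '' (C ∩ Set.Ioc i (i + n)) = C ∩ Set.Icc (1 : ℤ) (n : ℤ) := by
      apply Set.Subset.antisymm
      · rintro _ ⟨x, ⟨hxC, -⟩, rfl⟩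
        exact ⟨(hψC x).mp hxC, hψmem x⟩
      · rintro y ⟨hyC, hy1, hy2⟩
        refine ⟨i + n - (i - y) % n, ⟨?_, ?_, ?_⟩, ?_⟩
        · have h1 := Int.emod_add_mul_ediv (i - y) (n : ℤ)
          have hx : i + n - (i - y) % n = y + (1 + (i - y) / n) * n := by linarith
          rw [hx]; exact (hper' y _).mp hyC
        · have h2 := Int.emod_lt_of_pos (i - y) hn0
          omega
        · have h1 := Int.emod_nonneg (i - y) (by positivity : (n : ℤ) ≠ 0)
          omega
        · have h1 := Int.emod_add_mul_ediv (i - y) (n : ℤ)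
          have hx : i + n - (i - y) % n = y + (1 + (i - y) / n) * n := by linarith
          have : ψ (i + n - (i - y) % n) = ψ y := by
            rw [hx]
            simp only [hψ]
            rw [show y + (1 + (i - y) / n) * n - 1 = y - 1 + (1 + (i - y) / n) * (n : ℤ) by ring,
              Int.add_mul_emod_self_right]
          rw [this]
          simp only [hψ]
          rw [Int.emod_eq_of_lt (by omega) (by omega)]
          omega
    rw [nOf, ← himg, Set.ncard_image_of_injOn hinj]
  -- r sends C ∩ (a, b] onto (r a, r b]
  have rimg : ∀ a ∈ C, ∀ b ∈ C, a ≤ b →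
      r '' (C ∩ Set.Ioc a b) = Set.Ioc (r a) (r b) := by
    intro a haC b hbC hab
    apply Set.Subset.antisymm
    · rintro _ ⟨x, ⟨hxC, hx1, hx2⟩, rfl⟩
      exact ⟨hmono haC hxC hx1, hmono.monotoneOn hxC hbC hx2⟩
    · rintro y ⟨hy1, hy2⟩
      obtain ⟨x, hxC, rfl⟩ := hbij.2.2 (Set.mem_univ y)
      refine ⟨x, ⟨hxC, ?_, ?_⟩, rfl⟩
      · by_contra h
        exact absurd (hmono.monotoneOn hxC haC (not_lt.mp h)) (not_le.mpr hy1)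
      · by_contra h
        exact absurd (hmono hbC hxC (not_le.mp h)) (not_lt.mpr hy2)
  set m : ℕ := nOf n C with hm
  -- key: r (a + n) = r a + m for a ∈ C
  have radd : ∀ a ∈ C, r (a + n) = r a + m := by
    intro a haC
    have haN : a + n ∈ C := (hper a).mp haC
    have hlt : r a < r (a + n) := hmono haC haN (by omega)
    have h1 : (Set.Ioc (r a) (r (a + n))).ncard = m := by
      rw [← rimg a haC (a + n) haN (by omega),
        Set.ncard_image_of_injOn (hbij.2.1.mono Set.inter_subset_left), hcount a]
    have h2 : (Set.Ioc (r a) (r (a + n))).ncard = (r (a + n) - r a).toNat := by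
      rw [← Finset.coe_Ioc, Set.ncard_coe_finset, Int.card_Ioc]
    omega
  constructor
  · constructor
    · -- injective
      intro x₁ x₂ hx
      obtain ⟨i₁, hi₁, rfl⟩ := hbij.2.2 (Set.mem_univ x₁)
      obtain ⟨i₂, hi₂, rfl⟩ := hbij.2.2 (Set.mem_univ x₂)
      rw [hg i₁ hi₁, hg i₂ hi₂] at hx
      have := hbij.2.1 ((hclosed i₁).mp hi₁) ((hclosed i₂).mp hi₂) hx
      rw [finj this]
    · -- surjective
      intro y
      obtain ⟨j, hjC, rfl⟩ := hbij.2.2 (Set.mem_univ y)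
      obtain ⟨i, rfl⟩ := fsurj j
      have hiC : i ∈ C := (hclosed i).mpr hjC
      exact ⟨r i, hg i hiC⟩
  · -- periodicity
    intro x
    obtain ⟨i, hiC, rfl⟩ := hbij.2.2 (Set.mem_univ x)
    have hiN : i + n ∈ C := (hper i).mp hiC
    have hfiC : f i ∈ C := (hclosed i).mp hiC
    calc g (r i + m) = g (r (i + n)) := by rw [radd i hiC]
      _ = r (f (i + n)) := hg _ hiN
      _ = r (f i + n) := by rw [hfn]
      _ = r (f i) + m := radd _ hfiC
      _ = g (r i) + m := by rw [hg i hiC]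
end

section
/- Let f be an affine permutation of period n. Then the extended affine Weyl group element associated to f has finite order modulo translations by Λⁿ (where Λ : i ↦ i+1) if and only if all cycles of f have the same slope. Concretely: there exists N ≥ 1 such that f^N(i) − i is divisible by n and the integer (f^N(i) − i)/n is independent of i, if and only if the slope ν_f(C) := k_f(C)/n_f(C) is the same for all cycles C of f. -/
namespace Stmt6Aux

variable {n : ℕ} {f : ℤ → ℤ}

/-- Casting to `ZMod n` detects differing by a multiple of `n`. -/
lemma zmod_eq_iff (a b : ℤ) :
    ((a : ZMod n) = (b : ZMod n)) ↔ ∃ c : ℤ, b = a + c * (n : ℤ) := by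
  rw [ZMod.intCast_eq_intCast_iff]
  constructor
  · intro h
    obtain ⟨c, hc⟩ := h.dvd
    exact ⟨c, by linear_combination hc⟩
  · rintro ⟨c, rfl⟩
    simp [Int.ModEq, Int.add_mul_emod_self_right]

lemma shift (hf : IsAffinePerm n f) : ∀ (c i : ℤ), f (i + c * n) = f i + c * n := by
  intro c
  induction c using Int.induction_on with
  | zero => simp
  | succ c ih =>
      intro i
      have h1 : i + ((c : ℤ) + 1) * n = (i + c * n) + n := by ring
      rw [h1, hf.2, ih]; ring
  | pred c ih =>
      intro i
      have h1 : f (i + (-(c : ℤ) - 1) * n + n) = f (i + (-(c : ℤ) - 1) * n) + n := hf.2 _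
      have h2 : i + (-(c : ℤ) - 1) * n + n = i + (-(c : ℤ)) * n := by ring
      rw [h2, ih] at h1
      linarith [h1]

lemma iter_shift (hf : IsAffinePerm n f) :
    ∀ (a : ℕ) (c i : ℤ), f^[a] (i + c * n) = f^[a] i + c * n := by
  intro a
  induction a with
  | zero => simp
  | succ a ih =>
      intro c i
      rw [Function.iterate_succ_apply', Function.iterate_succ_apply', ih, shift hf]

lemma mem_shift {C : Set ℤ} (hper : ∀ i : ℤ, i ∈ C ↔ i + n ∈ C) :
    ∀ (c : ℤ) (j : ℤ), j ∈ C → j + c * n ∈ C := by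
  intro c
  induction c using Int.induction_on with
  | zero => simpa using fun j h => h
  | succ c ih =>
      intro j hj
      have := (hper (j + c * n)).1 (ih j hj)
      have h2 : j + c * n + n = j + ((c : ℤ) + 1) * n := by ring
      rwa [h2] at this
  | pred c ih =>
      intro j hj
      have h2 : j + (-(c : ℤ) - 1) * n + n = j + (-(c : ℤ)) * n := by ring
      exact (hper (j + (-(c : ℤ) - 1) * n)).2 (by rw [h2]; exact ih j hj)

lemma mem_iter_back {C : Set ℤ} (hcl : ∀ i : ℤ, i ∈ C ↔ f i ∈ C) :
    ∀ (a : ℕ) (x : ℤ), f^[a] x ∈ C → x ∈ C := by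
  intro a
  induction a with
  | zero => simpa using fun x h => h
  | succ a ih =>
      intro x hx
      rw [Function.iterate_succ_apply'] at hx
      exact ih x ((hcl _).2 hx)

lemma mem_iter_fwd {C : Set ℤ} (hcl : ∀ i : ℤ, i ∈ C ↔ f i ∈ C) :
    ∀ (a : ℕ) (x : ℤ), x ∈ C → f^[a] x ∈ C := by
  intro a
  induction a with
  | zero => simpa using fun x h => h
  | succ a ih =>
      intro x hx
      rw [Function.iterate_succ_apply']
      exact (hcl _).1 (ih x hx)

/-- `nOf` is at least one for a nonempty periodic set. -/
lemma nOf_pos (hn : 1 ≤ n) {C : Set ℤ} (hne : C.Nonempty)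
    (hper : ∀ i : ℤ, i ∈ C ↔ i + n ∈ C) : 1 ≤ nOf n C := by
  obtain ⟨j, hj⟩ := hne
  set q : ℤ := (j - 1) / (n : ℤ) with hq
  set r : ℤ := (j - 1) % (n : ℤ) + 1 with hrdef
  have hed := Int.emod_add_mul_ediv (j - 1) (n : ℤ)
  have h1 : r = j + (-q) * n := by
    rw [hrdef, hq]; linear_combination hed
  have hrC : r ∈ C := by rw [h1]; exact mem_shift hper (-q) j hj
  have hnp : (0 : ℤ) < n := by exact_mod_cast hn
  have h0 : 0 ≤ (j - 1) % (n : ℤ) := Int.emod_nonneg _ (by omega)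
  have h2 : (j - 1) % (n : ℤ) < n := Int.emod_lt_of_pos _ hnp
  have hmem : r ∈ C ∩ Set.Icc (1 : ℤ) (n : ℤ) := ⟨hrC, by omega, by omega⟩
  have hfin : (C ∩ Set.Icc (1 : ℤ) (n : ℤ)).Finite :=
    Set.Finite.subset (Set.finite_Icc _ _) (fun x hx => hx.2)
  exact (Set.ncard_pos hfin).2 ⟨r, hmem⟩

/-- Iterating the block relation. -/
lemma iter_block (hf : IsAffinePerm n f) {C : Set ℤ}
    (hper : ∀ i : ℤ, i ∈ C ↔ i + n ∈ C) {m : ℕ} {k : ℤ}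
    (hk : ∀ j ∈ C, f^[m] j = j + k * n) :
    ∀ (t : ℕ), ∀ j ∈ C, f^[m * t] j = j + (t : ℤ) * k * n := by
  intro t
  induction t with
  | zero => simp
  | succ t ih =>
      intro j hj
      have h1 : m * (t + 1) = m + m * t := by ring
      rw [h1, Function.iterate_add_apply, ih j hj]
      have hmem : j + (t : ℤ) * k * n ∈ C := mem_shift hper ((t : ℤ) * k) j hj
      rw [hk _ hmem]
      push_cast; ring

/-- The reduction of `f` modulo `n`. -/
def gbar (n : ℕ) (f : ℤ → ℤ) : ZMod n → ZMod n :=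
  fun x => ((f (x.val : ℤ) : ℤ) : ZMod n)

lemma cast_val [NeZero n] (x : ZMod n) : (((x.val : ℤ)) : ZMod n) = x := by
  push_cast
  exact ZMod.natCast_rightInverse x

lemma gbar_cast [NeZero n] (hf : IsAffinePerm n f) (j : ℤ) :
    gbar n f (j : ZMod n) = ((f j : ℤ) : ZMod n) := by
  set x : ZMod n := (j : ZMod n) with hx
  have hv : (((x.val : ℤ)) : ZMod n) = (j : ZMod n) := by rw [cast_val]
  obtain ⟨c, hc⟩ := (zmod_eq_iff _ _).1 hv
  rw [show gbar n f x = ((f (x.val : ℤ) : ℤ) : ZMod n) from rfl]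
  rw [hc, shift hf]
  push_cast
  simp [ZMod.natCast_self]

lemma gbar_inj [NeZero n] (hf : IsAffinePerm n f) : Function.Injective (gbar n f) := by
  intro x y h
  have h' : ((f (x.val : ℤ) : ℤ) : ZMod n) = ((f (y.val : ℤ) : ℤ) : ZMod n) := h
  obtain ⟨c, hc⟩ := (zmod_eq_iff _ _).1 h'
  have : f ((y.val : ℤ)) = f ((x.val : ℤ) + c * n) := by rw [shift hf]; linarith [hc]
  have hxy : (y.val : ℤ) = (x.val : ℤ) + c * n := hf.1.1 this
  have : (((y.val : ℤ)) : ZMod n) = (((x.val : ℤ)) : ZMod n) := by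
    rw [hxy]; push_cast; simp [ZMod.natCast_self]
  rw [cast_val, cast_val] at this
  exact this.symm

lemma gbar_iter_cast [NeZero n] (hf : IsAffinePerm n f) :
    ∀ (a : ℕ) (j : ℤ), (gbar n f)^[a] (j : ZMod n) = ((f^[a] j : ℤ) : ZMod n) := by
  intro a
  induction a with
  | zero => simp
  | succ a ih =>
      intro j
      rw [Function.iterate_succ_apply', Function.iterate_succ_apply', ih, gbar_cast hf]

lemma exists_period [NeZero n] (hf : IsAffinePerm n f) (x : ZMod n) :
    ∃ p : ℕ, 0 < p ∧ (gbar n f)^[p] x = x := by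
  obtain ⟨a, b, hab, heq⟩ :=
    Finite.exists_ne_map_eq_of_infinite (fun a : ℕ => (gbar n f)^[a] x)
  wlog hlt : a < b generalizing a b
  · exact this b a hab.symm heq.symm (by omega)
  have hinj : Function.Injective ((gbar n f)^[a]) := Function.Injective.iterate (gbar_inj hf) a
  have h1 : (gbar n f)^[a] x = (gbar n f)^[a] ((gbar n f)^[b - a] x) := by
    rw [← Function.iterate_add_apply]
    have : a + (b - a) = b := by omega
    rw [this]; exact heq
  exact ⟨b - a, by omega, (hinj h1).symm⟩

/-- The orbit of `i0` under `f` and translation by `n`. -/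
def Dset (n : ℕ) (f : ℤ → ℤ) (i0 : ℤ) : Set ℤ :=
  {j | ∃ (a : ℕ) (c : ℤ), j = f^[a] i0 + c * n}

lemma Dset_mem_iff_cast (hn : 1 ≤ n) (hf : IsAffinePerm n f) (i0 j : ℤ) :
    j ∈ Dset n f i0 ↔ ∃ a : ℕ, (j : ZMod n) = (gbar n f)^[a] ((i0 : ZMod n)) := by
  haveI : NeZero n := ⟨by omega⟩
  constructor
  · rintro ⟨a, c, rfl⟩
    refine ⟨a, ?_⟩
    rw [gbar_iter_cast hf]
    exact ((zmod_eq_iff _ _).2 ⟨c, rfl⟩).symm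
  · rintro ⟨a, ha⟩
    rw [gbar_iter_cast hf] at ha
    obtain ⟨c, hc⟩ := (zmod_eq_iff _ _).1 ha.symm
    exact ⟨a, c, hc⟩

lemma Dset_mem_self (i0 : ℤ) : i0 ∈ Dset n f i0 := ⟨0, 0, by simp⟩

lemma Dset_rep_pos (hn : 1 ≤ n) (hf : IsAffinePerm n f) (i0 : ℤ) {j : ℤ}
    (hj : j ∈ Dset n f i0) : ∃ a : ℕ, 1 ≤ a ∧ ∃ c : ℤ, j = f^[a] i0 + c * n := by
  haveI : NeZero n := ⟨by omega⟩
  obtain ⟨a, c, rfl⟩ := hj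
  rcases Nat.eq_zero_or_pos a with ha | ha
  · subst ha
    obtain ⟨p, hp, hper⟩ := exists_period hf ((i0 : ZMod n))
    rw [gbar_iter_cast hf] at hper
    obtain ⟨c', hc'⟩ := (zmod_eq_iff _ _).1 hper
    refine ⟨p, hp, c' + c, ?_⟩
    simp only [Function.iterate_zero_apply]
    linear_combination hc'
  · exact ⟨a, ha, c, rfl⟩

lemma Dset_closed (hn : 1 ≤ n) (hf : IsAffinePerm n f) (i0 : ℤ) :
    IsClosedSet n f (Dset n f i0) := by
  refine ⟨⟨i0, Dset_mem_self i0⟩, ?_, ?_⟩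
  · intro j
    constructor
    · rintro ⟨a, c, rfl⟩; exact ⟨a, c + 1, by ring⟩
    · rintro ⟨a, c, hj⟩; exact ⟨a, c - 1, by linarith [hj]⟩
  · intro j
    constructor
    · rintro ⟨a, c, rfl⟩
      refine ⟨a + 1, c, ?_⟩
      rw [shift hf, Function.iterate_succ_apply']
    · intro hfj
      obtain ⟨a, ha, c, hrep⟩ := Dset_rep_pos hn hf i0 hfj
      have h2 : f^[a] i0 = f (f^[a - 1] i0) := by
        conv_lhs => rw [show a = (a - 1) + 1 by omega]
        rw [Function.iterate_succ_apply']
      have h1 : f j = f (f^[a - 1] i0 + c * n) := by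
        rw [shift hf, ← h2]; exact hrep
      exact ⟨a - 1, c, hf.1.1 h1⟩

lemma Dset_cycle (hn : 1 ≤ n) (hf : IsAffinePerm n f) (i0 : ℤ) :
    IsCycleOf n f (Dset n f i0) := by
  refine ⟨Dset_closed hn hf i0, ?_⟩
  intro C' hsub hC'
  refine Set.Subset.antisymm hsub ?_
  obtain ⟨j, hj⟩ := hC'.1
  obtain ⟨a, c, hjrep⟩ := hsub hj
  have h1 : f^[a] i0 ∈ C' := by
    have := mem_shift hC'.2.1 (-c) j hj
    have h2 : j + (-c) * n = f^[a] i0 := by rw [hjrep]; ring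
    rwa [h2] at this
  have hi0 : i0 ∈ C' := mem_iter_back hC'.2.2 a i0 h1
  rintro x ⟨b, c', rfl⟩
  exact mem_shift hC'.2.1 c' _ (mem_iter_fwd hC'.2.2 b i0 hi0)

/-- Main structural lemma about the cycle through `i0`. -/
lemma Dset_key (hn : 1 ≤ n) (hf : IsAffinePerm n f) (i0 : ℤ) :
    1 ≤ nOf n (Dset n f i0) ∧ nOf n (Dset n f i0) ≤ n ∧
    ∃ k : ℤ, ∀ j ∈ Dset n f i0, f^[nOf n (Dset n f i0)] j = j + k * n := by
  haveI : NeZero n := ⟨by omega⟩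
  set g := gbar n f with hg
  set x0 : ZMod n := (i0 : ZMod n) with hx0
  set S : Set (ZMod n) := {x | ∃ a : ℕ, x = g^[a] x0} with hS
  -- minimal period
  obtain ⟨p, hp, hper⟩ := exists_period hf x0
  have hpp : Function.IsPeriodicPt g p x0 := hper
  set m' := Function.minimalPeriod g x0 with hm'
  have hm'pos : 0 < m' := hpp.minimalPeriod_pos hp
  have hfix : g^[m'] x0 = x0 := Function.isPeriodicPt_minimalPeriod g x0
  -- S as image of Iio m'
  have hSimg : S = (fun a => g^[a] x0) '' Set.Iio m' := by
    apply Set.Subset.antisymm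
    · rintro x ⟨a, rfl⟩
      exact ⟨a % m', Nat.mod_lt _ hm'pos, Function.iterate_mod_minimalPeriod_eq⟩
    · rintro x ⟨a, _, rfl⟩
      exact ⟨a, rfl⟩
  have hScard : S.ncard = m' := by
    rw [hSimg, Set.ncard_image_of_injOn Function.iterate_injOn_Iio_minimalPeriod,
      ← Finset.coe_range, Set.ncard_coe_finset, Finset.card_range]
  -- counting: nOf = S.ncard
  have hcount : nOf n (Dset n f i0) = S.ncard := by
    have himg : (fun j : ℤ => (j : ZMod n)) '' (Dset n f i0 ∩ Set.Icc (1 : ℤ) (n : ℤ)) = S := by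
      apply Set.Subset.antisymm
      · rintro x ⟨j, ⟨hjD, _⟩, rfl⟩
        obtain ⟨a, ha⟩ := (Dset_mem_iff_cast hn hf i0 j).1 hjD
        exact ⟨a, ha⟩
      · rintro x ⟨a, rfl⟩
        set y : ℤ := f^[a] i0 with hy
        set q : ℤ := (y - 1) / (n : ℤ) with hq
        set r : ℤ := (y - 1) % (n : ℤ) + 1 with hrdef
        have hed := Int.emod_add_mul_ediv (y - 1) (n : ℤ)
        have h1 : r = y + (-q) * n := by rw [hrdef, hq]; linear_combination hed
        have hnp : (0 : ℤ) < n := by exact_mod_cast hn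
        have h0 : 0 ≤ (y - 1) % (n : ℤ) := Int.emod_nonneg _ (by omega)
        have h2 : (y - 1) % (n : ℤ) < n := Int.emod_lt_of_pos _ hnp
        refine ⟨r, ⟨⟨a, -q, h1⟩, by constructor <;> omega⟩, ?_⟩
        have hry : (r : ZMod n) = (y : ZMod n) := ((zmod_eq_iff y r).2 ⟨-q, h1⟩).symm
        show ((r : ℤ) : ZMod n) = g^[a] x0
        rw [hry, hy, ← gbar_iter_cast hf]
    have hinjOn : Set.InjOn (fun j : ℤ => (j : ZMod n))
        (Dset n f i0 ∩ Set.Icc (1 : ℤ) (n : ℤ)) := by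
      rintro j1 ⟨_, hj1⟩ j2 ⟨_, hj2⟩ hc
      obtain ⟨c, hc2⟩ := (zmod_eq_iff _ _).1 hc
      simp only [Set.mem_Icc] at hj1 hj2
      have hnp : (0 : ℤ) < n := by exact_mod_cast hn
      have hc0 : c = 0 := by
        rcases lt_trichotomy c 0 with h | h | h
        · exfalso
          have h1 : c * (n : ℤ) ≤ -1 * n :=
            mul_le_mul_of_nonneg_right (by omega) hnp.le
          linarith [hj2.1, hj1.2, hc2, h1]
        · exact h
        · exfalso
          have h1 : 1 * (n : ℤ) ≤ c * n :=
            mul_le_mul_of_nonneg_right (by omega) hnp.le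
          linarith [hj1.1, hj2.2, hc2, h1]
      rw [hc0] at hc2
      simp at hc2
      omega
    show (Dset n f i0 ∩ Set.Icc (1 : ℤ) (n : ℤ)).ncard = S.ncard
    rw [← himg, Set.ncard_image_of_injOn hinjOn]
  -- g^[m'] fixes S pointwise
  have hfixS : ∀ x ∈ S, g^[m'] x = x := by
    rintro x ⟨a, rfl⟩
    rw [← Function.iterate_add_apply, add_comm, Function.iterate_add_apply, hfix]
  set m := nOf n (Dset n f i0) with hmdef
  have hmm : m = m' := hcount.trans hScard
  have hSle : S.ncard ≤ n := by
    have h1 : S.ncard ≤ (Set.univ : Set (ZMod n)).ncard :=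
      Set.ncard_le_ncard (Set.subset_univ S) Set.finite_univ
    rwa [Set.ncard_univ, Nat.card_eq_fintype_card, ZMod.card] at h1
  refine ⟨by omega, by omega, ?_⟩
  -- existence of k
  have hx0S : x0 ∈ S := ⟨0, rfl⟩
  have hcast : ((f^[m] i0 : ℤ) : ZMod n) = (i0 : ZMod n) := by
    rw [← gbar_iter_cast hf, ← hx0, hmm]
    exact hfixS x0 hx0S
  obtain ⟨k, hk⟩ := (zmod_eq_iff i0 (f^[m] i0)).1 hcast.symm
  refine ⟨k, ?_⟩
  rintro j ⟨a, c, rfl⟩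
  rw [iter_shift hf]
  have hcomm : f^[m] (f^[a] i0) = f^[a] (f^[m] i0) := by
    rw [← Function.iterate_add_apply, add_comm, Function.iterate_add_apply]
  rw [hcomm, hk, iter_shift hf]
  ring

end Stmt6Aux

open Stmt6Aux in
/-- `f` has finite order modulo translations (some power of `f` equals translation by a
multiple of `n`) if and only if all cycles of `f` have the same slope `ν_f(C) = k_f(C)/n_f(C)`,
where `k_f(C)` is characterized by `f^[n_f C] i = i + k_f(C) * n` for all `i ∈ C`. -/
theorem stmt_6 (n : ℕ) (hn : 1 ≤ n) (f : ℤ → ℤ) (hf : IsAffinePerm n f) :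
    (∃ N : ℕ, 1 ≤ N ∧ ∃ d : ℤ, ∀ i : ℤ, f^[N] i = i + d * n) ↔
    (∃ ν : ℚ, ∀ C : Set ℤ, IsCycleOf n f C →
      ∀ k : ℤ, (∀ i ∈ C, f^[nOf n C] i = i + k * n) →
        (k : ℚ) / (nOf n C : ℚ) = ν) := by
  constructor
  · rintro ⟨N, hN, d, hd⟩
    refine ⟨(d : ℚ) / (N : ℚ), ?_⟩
    intro C hC k hk
    obtain ⟨i, hi⟩ := hC.1.1
    have hm : 1 ≤ nOf n C := nOf_pos hn hC.1.1 hC.1.2.1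
    set m := nOf n C with hmdef
    have h1 : f^[m * N] i = i + (N : ℤ) * k * n := iter_block hf hC.1.2.1 hk N i hi
    have hglob : ∀ j ∈ (Set.univ : Set ℤ), f^[N] j = j + d * n := fun j _ => hd j
    have h2 : f^[N * m] i = i + (m : ℤ) * d * n :=
      iter_block hf (fun i => by simp) hglob m i (Set.mem_univ i)
    rw [mul_comm] at h1
    rw [h1] at h2
    have hnz : (n : ℤ) ≠ 0 := by exact_mod_cast by omega
    have hkey : (N : ℤ) * k = (m : ℤ) * d := by
      have h3 : (N : ℤ) * k * n = (m : ℤ) * d * n := by linarith [h2]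
      exact mul_right_cancel₀ hnz h3
    have hmQ : ((m : ℚ)) ≠ 0 := by exact_mod_cast by omega
    have hNQ : ((N : ℚ)) ≠ 0 := by exact_mod_cast by omega
    rw [div_eq_div_iff hmQ hNQ]
    have h4 : (k : ℤ) * N = d * m := by linarith [hkey]
    exact_mod_cast h4
  · rintro ⟨ν, hν⟩
    set N := n.factorial with hNdef
    have hN1 : 1 ≤ N := Nat.one_le_iff_ne_zero.2 (Nat.factorial_ne_zero n)
    have key : ∀ i : ℤ, ∃ d : ℤ, f^[N] i = i + d * n ∧ (d : ℚ) = (N : ℚ) * ν := by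
      intro i
      obtain ⟨hm1, hmn, k, hk⟩ := Dset_key hn hf i
      set m := nOf n (Dset n f i) with hmdef
      have hcyc := Dset_cycle hn hf i
      have hν' : (k : ℚ) / (m : ℚ) = ν := hν _ hcyc k hk
      have hdvd : m ∣ N := Nat.dvd_factorial (by omega) hmn
      obtain ⟨q, hq⟩ := hdvd
      refine ⟨(q : ℤ) * k, ?_, ?_⟩
      · have := iter_block hf (Dset_closed hn hf i).2.1 hk q i (Dset_mem_self i)
        rw [← hq] at this
        rw [this]
      · have hmQ : ((m : ℚ)) ≠ 0 := by exact_mod_cast by omega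
        rw [← hν', hq]
        push_cast
        field_simp
    obtain ⟨d0, hd0, hd0'⟩ := key 0
    refine ⟨N, hN1, d0, fun i => ?_⟩
    obtain ⟨d, hd, hd'⟩ := key i
    have : d = d0 := by exact_mod_cast hd'.trans hd0'.symm
    rwa [this] at hd
end

section
/- For an affine permutation g of period n with k(g) = k and having a single cycle (i.e., the induced permutation of ℤ/nℤ is an n-cycle considered together with the period structure so that g has exactly one cycle), the Coxeter length ℓ(g) satisfies ℓ(g) ≥ gcd(k, n) − 1. -/
/-- `k(f) = (1/n) ∑_{i=1}^n (f i - i)`, as a rational number. -/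
noncomputable def kOf (n : ℕ) (f : ℤ → ℤ) : ℚ :=
  ((∑ i ∈ Finset.Icc (1 : ℤ) (n : ℤ), (f i - i) : ℤ) : ℚ) / (n : ℚ)

/-- The Coxeter length `ℓ(f) = #{(i,j) : i < j, f i > f j, 1 ≤ i ≤ n}`. -/
noncomputable def lenOf (n : ℕ) (f : ℤ → ℤ) : ℕ :=
  {p : ℤ × ℤ | p.1 < p.2 ∧ f p.2 < f p.1 ∧ 1 ≤ p.1 ∧ p.1 ≤ (n : ℤ)}.ncard



open Relation


namespace Stmt9Aux

/-- The inversion set. -/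
def invSet (n : ℕ) (g : ℤ → ℤ) : Set (ℤ × ℤ) :=
  {p : ℤ × ℤ | p.1 < p.2 ∧ g p.2 < g p.1 ∧ 1 ≤ p.1 ∧ p.1 ≤ (n : ℤ)}

lemma int_eq_zero_of_dvd_of_bounds {n a : ℤ} (hn : 0 < n) (h : n ∣ a)
    (h1 : -n < a) (h2 : a < n) : a = 0 := by
  obtain ⟨c, rfl⟩ := h
  rcases lt_trichotomy c 0 with hc | hc | hc
  · nlinarith
  · simp [hc]
  · nlinarith

lemma periodic_ext {n : ℕ} {f : ℤ → ℤ} (hf : ∀ i : ℤ, f (i + n) = f i + n) :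
    ∀ (m : ℤ) (x : ℤ), f (x + m * n) = f x + m * n := by
  intro m
  induction m using Int.induction_on with
  | zero => intro x; simp
  | succ m ih =>
      intro x
      have h1 : x + ((m : ℤ) + 1) * n = (x + m * n) + n := by ring
      rw [h1, hf, ih]; ring
  | pred m ih =>
      intro x
      have h1 : x + (-(m : ℤ) - 1) * n + n = x + (-(m : ℤ)) * n := by ring
      have := hf (x + (-(m : ℤ) - 1) * n)
      rw [h1] at this
      rw [ih] at this
      omega

lemma exists_window {n : ℕ} (hn : 1 ≤ n) (x : ℤ) :
    ∃ j m : ℤ, 1 ≤ j ∧ j ≤ n ∧ x = j + m * n := by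
  have hn0 : (0 : ℤ) < n := by exact_mod_cast hn
  refine ⟨(x - 1) % n + 1, (x - 1) / n, ?_, ?_, ?_⟩
  · have := Int.emod_nonneg (x - 1) (by omega : (n : ℤ) ≠ 0); omega
  · have := Int.emod_lt_of_pos (x - 1) hn0; omega
  · have := Int.mul_ediv_add_emod (x - 1) (n : ℤ); linarith

/-- Finiteness of the inversion set of an affine permutation. -/
lemma inv_finite {n : ℕ} (hn : 1 ≤ n) {g : ℤ → ℤ} (hg : IsAffinePerm n g) :
    (invSet n g).Finite := by
  have hn0 : (0 : ℤ) < n := by exact_mod_cast hn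
  have hne : (Finset.Icc (1 : ℤ) (n : ℤ)).Nonempty := ⟨1, by simp; omega⟩
  set B : ℤ := (Finset.Icc (1 : ℤ) (n : ℤ)).sup' hne (fun j => j - g j) with hB
  set G : ℤ := (Finset.Icc (1 : ℤ) (n : ℤ)).sup' hne g with hG
  have hlow : ∀ x : ℤ, x - B ≤ g x := by
    intro x
    obtain ⟨j, m, hj1, hj2, rfl⟩ := exists_window hn x
    have h1 : g (j + m * n) = g j + m * n := periodic_ext hg.2 m j
    have h2 : j - g j ≤ B := Finset.le_sup' (fun j => j - g j) (by rw [Finset.mem_Icc]; omega)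
    omega
  have hhigh : ∀ j : ℤ, 1 ≤ j → j ≤ n → g j ≤ G := by
    intro j h1 h2
    exact Finset.le_sup' g (by rw [Finset.mem_Icc]; omega)
  apply Set.Finite.subset (Set.finite_Icc ((1:ℤ),(1:ℤ)) ((n:ℤ), G + B))
  rintro ⟨a, b⟩ ⟨h1, h2, h3, h4⟩
  simp only [Set.mem_Icc, Prod.mk_le_mk]
  have h2' : g b < g a := h2
  have h5 := hhigh a h3 h4
  have h6 := hlow b
  exact ⟨⟨h3, by omega⟩, h4, by omega⟩

/-- iterate an equivalence with a "step by c". -/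
lemma rel_step_mul {R : ℤ → ℤ → Prop} (hE : Equivalence R) {c : ℤ}
    (h : ∀ x : ℤ, R x (x + c)) : ∀ (m : ℤ) (x : ℤ), R x (x + m * c) := by
  intro m
  induction m using Int.induction_on with
  | zero => intro x; simpa using hE.refl x
  | succ m ih =>
      intro x
      have h2 := h (x + m * c)
      have h3 : x + m * c + c = x + ((m : ℤ) + 1) * c := by ring
      rw [h3] at h2
      exact hE.trans (ih x) h2
  | pred m ih =>
      intro x
      have h2 := h (x + (-(m : ℤ) - 1) * c)
      have h3 : x + (-(m : ℤ) - 1) * c + c = x + (-(m : ℤ)) * c := by ring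
      rw [h3] at h2
      exact hE.trans (ih x) (hE.symm h2)

lemma eqvGen_le {α : Type*} {r s : α → α → Prop}
    (h : ∀ x y, r x y → EqvGen s x y) : ∀ x y, EqvGen r x y → EqvGen s x y := by
  intro x y hxy
  induction hxy with
  | rel a b hab => exact h a b hab
  | refl a => exact EqvGen.refl a
  | symm a b _ ih => exact ih.symm a b
  | trans a b c _ _ ih1 ih2 => exact ih1.trans a b c ih2

end Stmt9Aux

namespace Stmt9Aux

/-- the affine transposition swapping `i, i+1` mod `n`. -/
def tt (n : ℕ) (i : ℤ) (x : ℤ) : ℤ :=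
  if (x - i) % n = 0 then x + 1 else if (x - (i + 1)) % n = 0 then x - 1 else x

lemma dvd_emod_sub {n : ℕ} {a b : ℤ} (h1 : a % n = 0) (h2 : b % n = 0) :
    (n : ℤ) ∣ (a - b) :=
  dvd_sub (Int.dvd_of_emod_eq_zero h1) (Int.dvd_of_emod_eq_zero h2)

lemma n_le_one_of_dvd_one {n : ℕ} (h : (n : ℤ) ∣ 1) : n ≤ 1 := by
  have := Int.le_of_dvd one_pos h
  omega

/-- trichotomy for tt -/
lemma tt_tri (n : ℕ) (i x : ℤ) :
    ((x - i) % n = 0 ∧ tt n i x = x + 1) ∨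
    ((x - i) % n ≠ 0 ∧ (x - (i + 1)) % n = 0 ∧ tt n i x = x - 1) ∨
    ((x - i) % n ≠ 0 ∧ (x - (i + 1)) % n ≠ 0 ∧ tt n i x = x) := by
  unfold tt; split_ifs with h1 h2
  · left; exact ⟨h1, rfl⟩
  · right; left; exact ⟨h1, h2, rfl⟩
  · right; right; exact ⟨h1, h2, rfl⟩

lemma tt_invol {n : ℕ} (hn2 : 2 ≤ n) (i x : ℤ) : tt n i (tt n i x) = x := by
  rcases tt_tri n i x with ⟨h1, h2⟩ | ⟨h1, h2, h3⟩ | ⟨h1, h2, h3⟩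
  · rw [h2]
    rcases tt_tri n i (x + 1) with ⟨g1, g2⟩ | ⟨g1, g2, g3⟩ | ⟨g1, g2, g3⟩
    · exfalso
      have := dvd_emod_sub g1 h1
      have e : x + 1 - i - (x - i) = 1 := by ring
      rw [e] at this
      exact absurd (n_le_one_of_dvd_one this) (by omega)
    · omega
    · exfalso; apply g2
      have e : x + 1 - (i + 1) = x - i := by ring
      rw [e]; exact h1
  · rw [h3]
    rcases tt_tri n i (x - 1) with ⟨g1, g2⟩ | ⟨g1, g2, g3⟩ | ⟨g1, g2, g3⟩
    · omega
    · exfalso; apply g1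
      have e : x - 1 - i = x - (i + 1) := by ring
      rw [e]; exact h2
    · exfalso; apply g1
      have e : x - 1 - i = x - (i + 1) := by ring
      rw [e]; exact h2
  · rw [h3, h3]

lemma tt_period {n : ℕ} (i x : ℤ) : tt n i (x + n) = tt n i x + n := by
  unfold tt
  have e1 : (x + (n : ℤ) - i) % n = (x - i) % n := by
    have e : x + (n : ℤ) - i = (x - i) + n := by ring
    rw [e]; simp
  have e2 : (x + (n : ℤ) - (i + 1)) % n = (x - (i + 1)) % n := by
    have e : x + (n : ℤ) - (i + 1) = (x - (i + 1)) + n := by ring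
    rw [e]; simp
  rw [e1, e2]
  split_ifs <;> ring

lemma tt_shift {n : ℕ} (i m x : ℤ) : tt n i (x + m * n) = tt n i x + m * n :=
  periodic_ext (tt_period i) m x

lemma tt_near {n : ℕ} (i x : ℤ) : x - 1 ≤ tt n i x ∧ tt n i x ≤ x + 1 := by
  unfold tt; split_ifs <;> omega

lemma tt_sub_dvd {n : ℕ} (hn2 : 2 ≤ n) (i : ℤ) {x y : ℤ}
    (h : (n : ℤ) ∣ (tt n i x - tt n i y)) : (n : ℤ) ∣ (x - y) := by
  obtain ⟨c, hc⟩ := h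
  have h1 : tt n i x = tt n i y + c * n := by linarith [hc]
  have h2 : tt n i (tt n i x) = tt n i (tt n i y) + c * n := by
    rw [h1, tt_shift]
  rw [tt_invol hn2, tt_invol hn2] at h2
  exact ⟨c, by linarith⟩

/-- tt on the window [i, i+n) -/
lemma tt_window {n : ℕ} (hn2 : 2 ≤ n) {i x : ℤ} (hx1 : i ≤ x) (hx2 : x < i + n) :
    tt n i x = if x = i then i + 1 else if x = i + 1 then i else x := by
  have hn0 : (0 : ℤ) < n := by exact_mod_cast (by omega : 1 ≤ n)
  rcases tt_tri n i x with ⟨h1, h2⟩ | ⟨h1, h2, h3⟩ | ⟨h1, h2, h3⟩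
  · have d1 : (n : ℤ) ∣ (x - i) := Int.dvd_of_emod_eq_zero h1
    have : x - i = 0 := int_eq_zero_of_dvd_of_bounds hn0 d1 (by omega) (by omega)
    have hxi : x = i := by omega
    rw [h2, if_pos hxi, hxi]
  · have hn2' : (2 : ℤ) ≤ n := by exact_mod_cast hn2
    have d1 : (n : ℤ) ∣ (x - (i + 1)) := Int.dvd_of_emod_eq_zero h2
    have : x - (i + 1) = 0 := int_eq_zero_of_dvd_of_bounds hn0 d1 (by omega) (by omega)
    have hxi : x = i + 1 := by omega
    rw [h3, if_neg (by omega), if_pos hxi, hxi]; ring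
  · have hxne : x ≠ i := by
      intro h; apply h1; rw [h]; simp
    have hxne2 : x ≠ i + 1 := by
      intro h; apply h2; rw [h]; simp
    rw [h3, if_neg hxne, if_neg hxne2]

lemma tt_mem_window {n : ℕ} (hn2 : 2 ≤ n) {i x : ℤ} (hx1 : i ≤ x) (hx2 : x < i + n) :
    i ≤ tt n i x ∧ tt n i x < i + n := by
  have hn0 : (2 : ℤ) ≤ n := by exact_mod_cast hn2
  rw [tt_window hn2 hx1 hx2]
  split_ifs <;> omega

lemma tt_bijective {n : ℕ} (hn2 : 2 ≤ n) (i : ℤ) : Function.Bijective (tt n i) :=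
  Function.bijective_iff_has_inverse.2 ⟨tt n i, tt_invol hn2 i, tt_invol hn2 i⟩

/-- reindexing sums over the window by tt -/
lemma sum_comp_tt {n : ℕ} (hn2 : 2 ≤ n) (i : ℤ) (F : ℤ → ℤ) :
    ∑ x ∈ Finset.Ico i (i + n), F (tt n i x) = ∑ x ∈ Finset.Ico i (i + n), F x := by
  refine Finset.sum_bijective (tt n i) (tt_bijective hn2 i) ?_ ?_
  · intro x
    simp only [Finset.mem_Ico]
    constructor
    · rintro ⟨h1, h2⟩; exact tt_mem_window hn2 h1 h2
    · rintro ⟨h1, h2⟩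
      have := tt_mem_window hn2 h1 h2
      rw [tt_invol hn2 i] at this
      exact this
  · intro x _; rfl

/-- sums of a periodic function over a length-n window don't depend on the window -/
lemma sum_window_eq {n : ℕ} (f : ℤ → ℤ) (hf : ∀ x, f (x + n) = f x) (a b : ℤ) :
    ∑ x ∈ Finset.Ico a (a + n), f x = ∑ x ∈ Finset.Ico b (b + n), f x := by
  have step : ∀ c : ℤ, ∑ x ∈ Finset.Ico (c + 1) (c + 1 + n), f x
      = ∑ x ∈ Finset.Ico c (c + n), f x := by
    intro c
    have e1 : Finset.Ico c (c + n + 1) = insert c (Finset.Ico (c + 1) (c + n + 1)) := by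
      ext x; simp only [Finset.mem_Ico, Finset.mem_insert]; omega
    have e2 : Finset.Ico c (c + n + 1) = insert (c + n) (Finset.Ico c (c + n)) := by
      ext x; simp only [Finset.mem_Ico, Finset.mem_insert]; omega
    have h1 : ∑ x ∈ Finset.Ico c (c + n + 1), f x
        = f c + ∑ x ∈ Finset.Ico (c + 1) (c + n + 1), f x := by
      rw [e1, Finset.sum_insert (by simp)]
    have h2 : ∑ x ∈ Finset.Ico c (c + n + 1), f x
        = f (c + n) + ∑ x ∈ Finset.Ico c (c + n), f x := by
      rw [e2, Finset.sum_insert (by simp)]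
    have e3 : c + 1 + (n : ℤ) = c + n + 1 := by ring
    rw [e3]
    rw [hf c] at h2
    omega
  have key : ∀ c : ℤ, ∑ x ∈ Finset.Ico c (c + n), f x
      = ∑ x ∈ Finset.Ico (0 : ℤ) ((0 : ℤ) + n), f x := by
    intro c
    induction c using Int.induction_on with
    | zero => rfl
    | succ m ih => rw [step (m : ℤ)]; exact ih
    | pred m ih =>
        have h := step (-(m : ℤ) - 1)
        have e : -(m : ℤ) - 1 + 1 = -(m : ℤ) := by ring
        rw [e] at h
        rw [← h]; exact ih
  rw [key a, key b]

end Stmt9Aux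

namespace Stmt9Aux

def nrm (n : ℕ) (x : ℤ) : ℤ := (x - 1) % n + 1

lemma nrm_mem {n : ℕ} (hn : 1 ≤ n) (x : ℤ) : 1 ≤ nrm n x ∧ nrm n x ≤ n := by
  have hn0 : (0 : ℤ) < n := by exact_mod_cast hn
  unfold nrm
  have h1 := Int.emod_nonneg (x - 1) (by omega : (n : ℤ) ≠ 0)
  have h2 := Int.emod_lt_of_pos (x - 1) hn0
  omega

lemma nrm_sub (n : ℕ) (x : ℤ) : ∃ m : ℤ, nrm n x = x + m * n := by
  refine ⟨-((x - 1) / n), ?_⟩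
  have := Int.mul_ediv_add_emod (x - 1) (n : ℤ)
  unfold nrm
  linarith

/-- K-invariance under composing with tt -/
lemma K_comp_tt {n : ℕ} (hn2 : 2 ≤ n) (i : ℤ) {g : ℤ → ℤ} (hg : IsAffinePerm n g) :
    ∑ x ∈ Finset.Icc (1 : ℤ) (n : ℤ), (g (tt n i x) - x)
      = ∑ x ∈ Finset.Icc (1 : ℤ) (n : ℤ), (g x - x) := by
  have hIcc : Finset.Icc (1 : ℤ) (n : ℤ) = Finset.Ico (1 : ℤ) (1 + n) := by
    ext x; simp only [Finset.mem_Icc, Finset.mem_Ico]; omega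
  have hper1 : ∀ x : ℤ, g (tt n i (x + n)) - (x + n) = g (tt n i x) - x := by
    intro x
    rw [tt_period, hg.2]; ring
  have hper2 : ∀ x : ℤ, g (x + n) - (x + n) = g x - x := by
    intro x; rw [hg.2]; ring
  rw [hIcc]
  rw [sum_window_eq (fun x => g (tt n i x) - x) hper1 1 i,
      sum_window_eq (fun x => g x - x) hper2 1 i]
  have e1 : ∀ x : ℤ, g (tt n i x) - x = (g (tt n i x) - tt n i x) + (tt n i x - x) := by
    intro x; ring
  rw [Finset.sum_congr rfl (fun x _ => e1 x), Finset.sum_add_distrib]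
  rw [sum_comp_tt hn2 i (fun y => g y - y)]
  have e2 : ∑ x ∈ Finset.Ico i (i + n), (tt n i x - x) = 0 := by
    rw [Finset.sum_sub_distrib, sum_comp_tt hn2 i (fun y => y)]
    simp
  rw [e2, add_zero]

lemma inv_step {n : ℕ} (hn2 : 2 ≤ n) {g : ℤ → ℤ} (hg : IsAffinePerm n g) {i : ℤ}
    (hi1 : 1 ≤ i) (hi2 : i ≤ (n : ℤ)) (hd : g (i + 1) < g i) :
    (invSet n (fun x => g (tt n i x))).ncard < (invSet n g).ncard := by
  have hn : 1 ≤ n := by omega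
  have hn0 : (0 : ℤ) < n := by exact_mod_cast hn
  have hn2' : (2 : ℤ) ≤ n := by exact_mod_cast hn2
  have hfin := inv_finite hn hg
  have gp := periodic_ext hg.2
  have descent_all : ∀ x : ℤ, (x - i) % n = 0 → g (x + 1) < g x := by
    intro x hx
    obtain ⟨m, hm⟩ := Int.dvd_of_emod_eq_zero hx
    have hx1 : x = i + m * n := by linarith [hm, mul_comm m (n : ℤ)]
    have e1 : g x = g i + m * n := by rw [hx1]; exact gp m i
    have e2 : g (x + 1) = g (i + 1) + m * n := by
      have e : x + 1 = (i + 1) + m * n := by linarith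
      rw [e]; exact gp m (i + 1)
    omega
  -- tt is order preserving on inversion pairs
  have step1 : ∀ a b : ℤ, a < b → g (tt n i b) < g (tt n i a) → tt n i a < tt n i b := by
    intro a b hab hgb
    by_contra hle
    push_neg at hle
    have hna := tt_near (n := n) i a
    have hnb := tt_near (n := n) i b
    rcases tt_tri n i a with ⟨c1a, e1a⟩ | ⟨c1a, c2a, e1a⟩ | ⟨c1a, c2a, e1a⟩ <;>
      rcases tt_tri n i b with ⟨c1b, e1b⟩ | ⟨c1b, c2b, e1b⟩ | ⟨c1b, c2b, e1b⟩
    · omega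
    · -- cond1 a, cond2 b
      have d := dvd_emod_sub c2b c1a
      have e : b - (i + 1) - (a - i) = b - a - 1 := by ring
      rw [e] at d
      have hba : b - a - 1 = 0 := int_eq_zero_of_dvd_of_bounds hn0 d (by omega) (by omega)
      have hb : b = a + 1 := by omega
      -- then tt a = a+1 = b, tt b = a, inversion says g a < g (a+1), contradicting descent
      have := descent_all a c1a
      rw [e1a, e1b, hb] at hgb
      have : g (a + 1 - 1) = g a := by norm_num
      omega
    · -- cond1 a, else b : b = a + 1 and then cond2 b should hold
      have hb : b = a + 1 := by omega
      apply c2b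
      have e : b - (i + 1) = a - i := by omega
      rw [e]; exact c1a
    · omega
    · omega
    · omega
    · omega
    · -- else a, cond2 b : b = a+1, then cond1 a should hold
      have hb : b = a + 1 := by omega
      apply c1a
      have e : a - i = b - (i + 1) := by omega
      rw [e]; exact c2b
    · omega
  set g' := fun x => g (tt n i x) with hg'
  set Φ : ℤ × ℤ → ℤ × ℤ :=
    fun p => (nrm n (tt n i p.1), tt n i p.2 + (nrm n (tt n i p.1) - tt n i p.1)) with hΦ
  have hmem : ∀ p ∈ invSet n g', Φ p ∈ invSet n g \ {((i : ℤ), i + 1)} := by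
    rintro ⟨a, b⟩ ⟨hab, hgb, ha1, ha2⟩
    have hgb' : g (tt n i b) < g (tt n i a) := hgb
    have htab := step1 a b hab hgb'
    obtain ⟨m, hm⟩ := nrm_sub n (tt n i a)
    constructor
    · refine ⟨?_, ?_, ?_, ?_⟩
      · simp only [hΦ]; omega
      · simp only [hΦ]
        have e1 : tt n i b + (nrm n (tt n i a) - tt n i a) = tt n i b + m * n := by omega
        rw [e1, hm]
        rw [gp m (tt n i b), gp m (tt n i a)]
        omega
      · exact (nrm_mem hn _).1
      · exact (nrm_mem hn _).2
    · simp only [Set.mem_singleton_iff, hΦ]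
      intro heq
      have h1 : nrm n (tt n i a) = i := congrArg Prod.fst heq
      have h2 : tt n i b + (nrm n (tt n i a) - tt n i a) = i + 1 := congrArg Prod.snd heq
      have h3 : tt n i b - tt n i a = 1 := by omega
      have hdvd : (n : ℤ) ∣ tt n i a - i := by
        refine ⟨-m, ?_⟩
        have : tt n i a + m * n = i := by omega
        linarith
      rcases tt_tri n i a with ⟨c1a, e1a⟩ | ⟨c1a, c2a, e1a⟩ | ⟨c1a, c2a, e1a⟩
      · -- tt a = a + 1 and n ∣ a - i : then n ∣ 1
        have d1 : (n : ℤ) ∣ (a - i) := Int.dvd_of_emod_eq_zero c1a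
        have : (n : ℤ) ∣ 1 := by
          have := dvd_sub hdvd d1
          have e : tt n i a - i - (a - i) = 1 := by omega
          rwa [e] at this
        exact absurd (n_le_one_of_dvd_one this) (by omega)
      · -- tt a = a - 1, tt b = a, so b = tt a = a - 1 < a, contra
        have hb : tt n i b = a := by omega
        have : b = tt n i a := by
          have := congrArg (tt n i) hb
          rwa [tt_invol hn2] at this
        omega
      · -- tt a = a, n ∣ a - i, contradicts else
        apply c1a
        apply Int.emod_eq_zero_of_dvd
        have e : a - i = tt n i a - i := by omega
        rw [e]; exact hdvd
  have hinj : Set.InjOn Φ (invSet n g') := by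
    rintro ⟨a, b⟩ ⟨hab, hgb, ha1, ha2⟩ ⟨a', b'⟩ ⟨hab', hgb', ha1', ha2'⟩ heq
    have h1 : nrm n (tt n i a) = nrm n (tt n i a') := congrArg Prod.fst heq
    obtain ⟨m, hm⟩ := nrm_sub n (tt n i a)
    obtain ⟨m', hm'⟩ := nrm_sub n (tt n i a')
    have hdvd : (n : ℤ) ∣ tt n i a - tt n i a' := by
      refine ⟨m' - m, ?_⟩
      have : tt n i a + m * n = tt n i a' + m' * n := by omega
      linarith [this]
    have hdvd2 := tt_sub_dvd hn2 i hdvd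
    have haa : a = a' := by
      have := int_eq_zero_of_dvd_of_bounds hn0 hdvd2 (by omega) (by omega)
      omega
    subst haa
    have h2 : tt n i b + (nrm n (tt n i a) - tt n i a)
        = tt n i b' + (nrm n (tt n i a) - tt n i a) := congrArg Prod.snd heq
    have h3 : tt n i b = tt n i b' := by omega
    have hb : b = b' := by
      have := congrArg (tt n i) h3
      rwa [tt_invol hn2, tt_invol hn2] at this
    rw [hb]
  have hdmem : ((i : ℤ), i + 1) ∈ invSet n g := ⟨by omega, hd, hi1, hi2⟩
  calc (invSet n g').ncard ≤ (invSet n g \ {((i : ℤ), i + 1)}).ncard :=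
        Set.ncard_le_ncard_of_injOn Φ hmem hinj hfin.diff
    _ < (invSet n g).ncard := Set.ncard_diff_singleton_lt_of_mem hdmem hfin

end Stmt9Aux

namespace Stmt9Aux

def eRel (n : ℕ) (g : ℤ → ℤ) : ℤ → ℤ → Prop := fun x y => y = g x ∨ y = x + n

/-- the number of cycles -/
noncomputable def cyc (n : ℕ) (g : ℤ → ℤ) : ℕ := Nat.card (Quot (eRel n g))

lemma eqvGen_shift {n : ℕ} {r : ℤ → ℤ → Prop} (h : ∀ x : ℤ, r x (x + n)) :
    ∀ (m : ℤ) (x : ℤ), EqvGen r x (x + m * n) :=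
  rel_step_mul (EqvGen.is_equivalence r) (fun x => EqvGen.rel _ _ (h x))

lemma quot_finite {n : ℕ} (hn : 1 ≤ n) {r : ℤ → ℤ → Prop} (h : ∀ x : ℤ, r x (x + n)) :
    Finite (Quot r) := by
  have hn0 : (0 : ℤ) < n := by exact_mod_cast hn
  apply Finite.of_surjective (fun j : Fin n => Quot.mk r ((j : ℤ) + 1))
  intro q
  induction q using Quot.ind with
  | _ x =>
    have h1 := Int.emod_nonneg (x - 1) (by omega : (n : ℤ) ≠ 0)
    have h2 := Int.emod_lt_of_pos (x - 1) hn0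
    have h3 := Int.mul_ediv_add_emod (x - 1) (n : ℤ)
    refine ⟨⟨((x - 1) % n).toNat, ?_⟩, ?_⟩
    · omega
    · apply Quot.eqvGen_sound
      have e1 : ((⟨((x - 1) % n).toNat, by omega⟩ : Fin n) : ℤ) = (x - 1) % n := by
        simp [Int.toNat_of_nonneg h1]
      rw [e1]
      have := eqvGen_shift h ((x - 1) / n) ((x - 1) % n + 1)
      have e2 : (x - 1) % n + 1 + (x - 1) / n * (n : ℤ) = x := by linarith
      rwa [e2] at this

lemma eRel_shift {n : ℕ} (g : ℤ → ℤ) : ∀ x : ℤ, eRel n g x (x + n) := fun _ => Or.inr rfl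

lemma cyc_finite {n : ℕ} (hn : 1 ≤ n) (g : ℤ → ℤ) : Finite (Quot (eRel n g)) :=
  quot_finite hn (eRel_shift g)

/-- cycle count of a shift -/
lemma cyc_shift {n : ℕ} (hn : 1 ≤ n) {g : ℤ → ℤ} (c : ℤ) (hgc : ∀ x, g x = x + c) :
    cyc n g = Int.gcd c (n : ℤ) := by
  set d : ℕ := Int.gcd c (n : ℤ) with hd
  have hdc : (d : ℤ) ∣ c := Int.gcd_dvd_left c (n : ℤ)
  have hdn : (d : ℤ) ∣ (n : ℤ) := Int.gcd_dvd_right c (n : ℤ)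
  have hc0 : ((c : ℤ) : ZMod d) = 0 := (ZMod.intCast_zmod_eq_zero_iff_dvd c d).2 hdc
  have hn0 : (((n : ℤ) : ℤ) : ZMod d) = 0 := (ZMod.intCast_zmod_eq_zero_iff_dvd _ d).2 hdn
  set f : Quot (eRel n g) → ZMod d := Quot.lift (fun x : ℤ => (x : ZMod d)) (by
    intro a b hab
    rcases hab with h | h
    · rw [h, hgc a]; push_cast; rw [hc0]; ring
    · have hn0' : ((n : ℕ) : ZMod d) = 0 :=
        (ZMod.natCast_eq_zero_iff n d).2 (Int.natCast_dvd_natCast.mp hdn)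
      rw [h]; push_cast; rw [hn0']; ring) with hf
  have hbij : Function.Bijective f := by
    constructor
    · intro q q'
      induction q using Quot.ind with
      | _ x =>
        induction q' using Quot.ind with
        | _ y =>
          intro hxy
          have hxy' : (x : ZMod d) = (y : ZMod d) := hxy
          have hdvd : (d : ℤ) ∣ y - x := Int.ModEq.dvd ((ZMod.intCast_eq_intCast_iff x y d).1 hxy')
          obtain ⟨m, hm⟩ := hdvd
          apply Quot.eqvGen_sound
          have stepc : ∀ x : ℤ, EqvGen (eRel n g) x (x + c) := by
            intro x
            exact EqvGen.rel _ _ (Or.inl (hgc x).symm)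
          have stepd : ∀ x : ℤ, EqvGen (eRel n g) x (x + (d : ℤ)) := by
            intro x
            have bez := Int.gcd_eq_gcd_ab c (n : ℤ)
            have s1 := rel_step_mul (EqvGen.is_equivalence _) stepc (Int.gcdA c (n : ℤ)) x
            have s2 := eqvGen_shift (eRel_shift (n := n) g) (Int.gcdB c (n : ℤ))
              (x + Int.gcdA c (n : ℤ) * c)
            have s3 := s1.trans _ _ _ s2
            have e : x + Int.gcdA c (n : ℤ) * c + Int.gcdB c (n : ℤ) * (n : ℤ)
                = x + (d : ℤ) := by
              rw [hd]; linarith [bez, mul_comm c (Int.gcdA c (n : ℤ)),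
                mul_comm (n : ℤ) (Int.gcdB c (n : ℤ))]
            rwa [e] at s3
          have s4 := rel_step_mul (EqvGen.is_equivalence _) stepd m x
          have e2 : x + m * (d : ℤ) = y := by linarith [hm, mul_comm m (d : ℤ)]
          rwa [e2] at s4
    · intro z
      obtain ⟨x, rfl⟩ := ZMod.intCast_surjective (n := d) z
      exact ⟨Quot.mk _ x, rfl⟩
  rw [cyc, Nat.card_eq_of_bijective f hbij, Nat.card_zmod]

/-- tt of successor when x ≡ i -/
lemma tt_succ {n : ℕ} (hn2 : 2 ≤ n) {i x : ℤ} (h : (x - i) % n = 0) : tt n i (x + 1) = x := by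
  rcases tt_tri n i (x + 1) with ⟨c1, e1⟩ | ⟨c1, c2, e1⟩ | ⟨c1, c2, e1⟩
  · exfalso
    have := dvd_emod_sub c1 h
    have e : x + 1 - i - (x - i) = 1 := by ring
    rw [e] at this
    exact absurd (n_le_one_of_dvd_one this) (by omega)
  · omega
  · exfalso; apply c2
    have e : x + 1 - (i + 1) = x - i := by ring
    rw [e]; exact h

lemma tt_pred {n : ℕ} (hn2 : 2 ≤ n) {i x : ℤ} (h : (x - (i + 1)) % n = 0) :
    tt n i (x - 1) = x := by
  have hc : (x - 1 - i) % n = 0 := by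
    have e : x - 1 - i = x - (i + 1) := by ring
    rw [e]; exact h
  rcases tt_tri n i (x - 1) with ⟨c1, e1⟩ | ⟨c1, c2, e1⟩ | ⟨c1, c2, e1⟩
  · omega
  · exact absurd hc c1
  · exact absurd hc c1

/-- the cycle count can grow by at most one when composing with tt -/
lemma cyc_le {n : ℕ} (hn2 : 2 ≤ n) {g : ℤ → ℤ} (hg : IsAffinePerm n g) (i : ℤ) :
    cyc n (fun x => g (tt n i x)) ≤ cyc n g + 1 := by
  classical
  have hn : 1 ≤ n := by omega
  set g' : ℤ → ℤ := fun x => g (tt n i x) with hg'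
  set pr : ℤ → ℤ → Prop := fun x y => eRel n g' x y ∨ (x = i ∧ y = i + 1) with hpr
  have prshift : ∀ x : ℤ, pr x (x + n) := fun x => Or.inl (Or.inr rfl)
  haveI finQg : Finite (Quot (eRel n g)) := cyc_finite hn g
  haveI finP : Finite (Quot pr) := quot_finite hn prshift
  haveI finQg' : Finite (Quot (eRel n g')) := cyc_finite hn g'
  -- every generator of E_g is in EqvGen pr
  have hle : ∀ x y, eRel n g x y → EqvGen pr x y := by
    intro x y h
    have pshift : ∀ m x, EqvGen pr x (x + m * (n : ℤ)) := eqvGen_shift prshift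
    rcases h with h | h
    · subst h
      rcases tt_tri n i x with ⟨c1, e1⟩ | ⟨c1, c2, e1⟩ | ⟨c1, c2, e1⟩
      · -- x ≡ i mod n : g x = g' (x+1), and x ~ x+1 through the pair
        obtain ⟨m, hm⟩ := Int.dvd_of_emod_eq_zero c1
        have hx : x = i + m * n := by linarith [hm, mul_comm m (n : ℤ)]
        have s1 : EqvGen pr x i := by
          have := pshift (-m) x
          have e : x + (-m) * n = i := by linarith [mul_comm m (n : ℤ)]
          rwa [e] at this
        have s2 : EqvGen pr i (i + 1) := EqvGen.rel _ _ (Or.inr ⟨rfl, rfl⟩)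
        have s3 : EqvGen pr (i + 1) (x + 1) := by
          have := pshift m (i + 1)
          have e : i + 1 + m * n = x + 1 := by linarith
          rwa [e] at this
        have s4 : EqvGen pr (x + 1) (g x) := by
          have : g x = g' (x + 1) := by
            show g x = g (tt n i (x + 1))
            rw [tt_succ hn2 c1]
          rw [this]
          exact EqvGen.rel _ _ (Or.inl (Or.inl rfl))
        exact ((s1.trans _ _ _ s2).trans _ _ _ s3).trans _ _ _ s4
      · -- x ≡ i+1 : g x = g' (x-1)
        obtain ⟨m, hm⟩ := Int.dvd_of_emod_eq_zero c2
        have s1 : EqvGen pr (x - 1) x := by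
          have := pshift m i
          have e1' : i + m * n = x - 1 := by linarith [mul_comm m (n : ℤ)]
          have s2 : EqvGen pr i (i + 1) := EqvGen.rel _ _ (Or.inr ⟨rfl, rfl⟩)
          have s3 := pshift m (i + 1)
          have e2' : i + 1 + m * n = x := by linarith [mul_comm m (n : ℤ)]
          rw [e1'] at this
          rw [e2'] at s3
          exact ((this.symm _ _).trans _ _ _ s2).trans _ _ _ s3
        have s4 : EqvGen pr (x - 1) (g x) := by
          have : g x = g' (x - 1) := by
            show g x = g (tt n i (x - 1))
            rw [tt_pred hn2 c2]
          rw [this]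
          exact EqvGen.rel _ _ (Or.inl (Or.inl rfl))
        exact (s1.symm _ _).trans _ _ _ s4
      · have : g x = g' x := by
          show g x = g (tt n i x)
          rw [e1]
        rw [this]
        exact EqvGen.rel _ _ (Or.inl (Or.inl rfl))
    · subst h
      exact EqvGen.rel _ _ (prshift x)
  -- surjection from Quot (eRel n g) onto Quot pr
  set F : Quot (eRel n g) → Quot pr :=
    Quot.lift (Quot.mk pr) (fun a b hab => Quot.eqvGen_sound (hle a b hab)) with hF
  have hFsur : Function.Surjective F := by
    intro q
    induction q using Quot.ind with
    | _ x => exact ⟨Quot.mk _ x, rfl⟩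
  have c1 : Nat.card (Quot pr) ≤ Nat.card (Quot (eRel n g)) :=
    Nat.card_le_card_of_surjective F hFsur
  -- characterization of EqvGen pr
  set E' : ℤ → ℤ → Prop := EqvGen (eRel n g') with hE'
  have hE'equiv : Equivalence E' := EqvGen.is_equivalence _
  have hchar : ∀ x y, EqvGen pr x y →
      E' x y ∨ (E' x i ∧ E' (i + 1) y) ∨ (E' x (i + 1) ∧ E' i y) := by
    intro x y h
    induction h with
    | rel a b hab =>
        rcases hab with h | ⟨h1, h2⟩
        · exact Or.inl (EqvGen.rel _ _ h)
        · subst h1; subst h2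
          exact Or.inr (Or.inl ⟨hE'equiv.refl _, hE'equiv.refl _⟩)
    | refl a => exact Or.inl (hE'equiv.refl a)
    | symm a b _ ih =>
        rcases ih with h | ⟨h1, h2⟩ | ⟨h1, h2⟩
        · exact Or.inl (hE'equiv.symm h)
        · exact Or.inr (Or.inr ⟨hE'equiv.symm h2, hE'equiv.symm h1⟩)
        · exact Or.inr (Or.inl ⟨hE'equiv.symm h2, hE'equiv.symm h1⟩)
    | trans a b c _ _ ih1 ih2 =>
        rcases ih1 with h1 | ⟨h1, h2⟩ | ⟨h1, h2⟩ <;>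
          rcases ih2 with h3 | ⟨h3, h4⟩ | ⟨h3, h4⟩
        · exact Or.inl (hE'equiv.trans h1 h3)
        · exact Or.inr (Or.inl ⟨hE'equiv.trans h1 h3, h4⟩)
        · exact Or.inr (Or.inr ⟨hE'equiv.trans h1 h3, h4⟩)
        · exact Or.inr (Or.inl ⟨h1, hE'equiv.trans h2 h3⟩)
        · exact Or.inl (hE'equiv.trans h1
            (hE'equiv.trans (hE'equiv.symm (hE'equiv.trans h2 h3)) h4))
        · exact Or.inl (hE'equiv.trans h1 h4)
        · exact Or.inr (Or.inr ⟨h1, hE'equiv.trans h2 h3⟩)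
        · exact Or.inl (hE'equiv.trans h1 h4)
        · exact Or.inl (hE'equiv.trans h1
            (hE'equiv.trans (hE'equiv.symm (hE'equiv.trans h2 h3)) h4))
    -- injection from Quot (eRel n g') into Option (Quot pr)
  set F' : Quot (eRel n g') → Quot pr :=
    Quot.lift (Quot.mk pr) (fun a b hab => Quot.sound (Or.inl hab)) with hF'
  set q0 : Quot (eRel n g') := Quot.mk _ (i + 1) with hq0
  set H : Quot (eRel n g') → Option (Quot pr) :=
    fun cq => if cq = q0 then none else some (F' cq) with hH
  have hHinj : Function.Injective H := by
    intro cq dq hcd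
    by_cases hc : cq = q0
    · by_cases hdq : dq = q0
      · rw [hc, hdq]
      · rw [hH] at hcd
        simp only [if_pos hc, if_neg hdq] at hcd
        simp at hcd
    · by_cases hdq : dq = q0
      · rw [hH] at hcd
        simp only [if_neg hc, if_pos hdq] at hcd
        simp at hcd
      · rw [hH] at hcd
        simp only [if_neg hc, if_neg hdq, Option.some_inj] at hcd
        induction cq using Quot.ind with
        | _ x =>
          induction dq using Quot.ind with
          | _ y =>
            have hxy : Quot.mk pr x = Quot.mk pr y := hcd
            have := Quot.eq.1 hxy
            rcases hchar x y this with h | ⟨h1, h2⟩ | ⟨h1, h2⟩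
            · exact Quot.eqvGen_sound h
            · exact absurd (Quot.eqvGen_sound (hE'equiv.symm h2)) hdq
            · exact absurd (Quot.eqvGen_sound h1) hc
  haveI := Fintype.ofFinite (Quot pr)
  have c2 : Nat.card (Quot (eRel n g')) ≤ Nat.card (Option (Quot pr)) :=
    Nat.card_le_card_of_injective H hHinj
  have c3 : Nat.card (Option (Quot pr)) = Nat.card (Quot pr) + 1 := by
    simp [Nat.card_eq_fintype_card]
  rw [cyc, cyc]
  omega

end Stmt9Aux

namespace Stmt9Aux

lemma mono_shift {n : ℕ} (hn : 1 ≤ n) {g : ℤ → ℤ} (hg : IsAffinePerm n g)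
    (hno : ∀ i : ℤ, 1 ≤ i → i ≤ (n : ℤ) → ¬ g (i + 1) < g i) : ∀ x : ℤ, g x = x + g 0 := by
  have hinj := hg.1.1
  have gp := periodic_ext hg.2
  have hmono : ∀ x : ℤ, g x < g (x + 1) := by
    intro x
    obtain ⟨j, m, hj1, hj2, rfl⟩ := exists_window hn x
    have h1 : g (j + m * n) = g j + m * n := gp m j
    have h2 : g (j + m * n + 1) = g (j + 1) + m * n := by
      have := gp m (j + 1)
      rw [show j + m * (n : ℤ) + 1 = j + 1 + m * n by ring]
      exact this
    have h3 : ¬ g (j + 1) < g j := hno j hj1 hj2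
    have h4 : g j ≠ g (j + 1) := fun h => by have := hinj h; omega
    omega
  have hstep : ∀ (m : ℕ) (x : ℤ), g x + m ≤ g (x + m) := by
    intro m
    induction m with
    | zero => simp
    | succ p ih =>
        intro x
        have h1 := ih x
        have h2 := hmono (x + p)
        have e : x + ((p : ℤ) + 1) = (x + p) + 1 := by ring
        push_cast
        rw [e]
        omega
  have hsucc : ∀ x : ℤ, g (x + 1) = g x + 1 := by
    intro x
    have h1 := hmono x
    have h2 := hstep (n - 1) (x + 1)
    have e : (x + 1) + ((n - 1 : ℕ) : ℤ) = x + n := by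
      have : ((n - 1 : ℕ) : ℤ) = (n : ℤ) - 1 := by omega
      rw [this]; ring
    rw [e, hg.2 x] at h2
    have e2 : ((n - 1 : ℕ) : ℤ) = (n : ℤ) - 1 := by omega
    rw [e2] at h2
    omega
  intro x
  induction x using Int.induction_on with
  | zero => simp
  | succ p ih => rw [hsucc p, ih]; ring
  | pred p ih =>
      have h := hsucc (-(p : ℤ) - 1)
      rw [show -(p : ℤ) - 1 + 1 = -(p : ℤ) by ring] at h
      rw [ih] at h
      omega

lemma cyc_eq_one {n : ℕ} {g : ℤ → ℤ} (hcyc : IsCycleOf n g Set.univ) : cyc n g = 1 := by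
  set E : ℤ → ℤ → Prop := EqvGen (eRel n g) with hE
  have hEq : Equivalence E := EqvGen.is_equivalence _
  have htot : ∀ y : ℤ, E 0 y := by
    set C : Set ℤ := {y | E 0 y} with hC
    have hclosed : IsClosedSet n g C := by
      refine ⟨⟨0, hEq.refl 0⟩, ?_, ?_⟩
      · intro y
        constructor
        · intro h; exact hEq.trans h (EqvGen.rel _ _ (Or.inr rfl))
        · intro h; exact hEq.trans h (hEq.symm (EqvGen.rel _ _ (Or.inr rfl)))
      · intro y
        constructor
        · intro h; exact hEq.trans h (EqvGen.rel _ _ (Or.inl rfl))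
        · intro h; exact hEq.trans h (hEq.symm (EqvGen.rel _ _ (Or.inl rfl)))
    have hCuniv := hcyc.2 C (Set.subset_univ C) hclosed
    intro y
    have : y ∈ C := by rw [hCuniv]; trivial
    exact this
  rw [cyc, Nat.card_eq_one_iff_unique]
  constructor
  · constructor
    intro q q'
    induction q using Quot.ind with
    | _ x =>
      induction q' using Quot.ind with
      | _ y => exact Quot.eqvGen_sound (hEq.trans (hEq.symm (htot x)) (htot y))
  · exact ⟨Quot.mk _ 0⟩

lemma main {n : ℕ} (hn : 1 ≤ n) (k : ℤ) :
    ∀ (m : ℕ) (g : ℤ → ℤ), IsAffinePerm n g →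
      (∑ x ∈ Finset.Icc (1 : ℤ) (n : ℤ), (g x - x)) = k * n →
      (invSet n g).ncard = m →
      Int.gcd k (n : ℤ) ≤ (invSet n g).ncard + cyc n g := by
  intro m
  induction m using Nat.strong_induction_on with
  | _ m ih =>
    intro g hg hK hm
    by_cases hdes : ∃ i : ℤ, 1 ≤ i ∧ i ≤ (n : ℤ) ∧ g (i + 1) < g i
    · obtain ⟨i, hi1, hi2, hd⟩ := hdes
      have hn2 : 2 ≤ n := by
        by_contra h
        have hn1 : n = 1 := by omega
        have h2 := hg.2 i
        rw [hn1] at h2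
        norm_num at h2
        omega
      set g2 : ℤ → ℤ := fun x => g (tt n i x) with hg2
      have hg2p : IsAffinePerm n g2 := by
        constructor
        · exact hg.1.comp (tt_bijective hn2 i)
        · intro x
          show g (tt n i (x + n)) = g (tt n i x) + n
          rw [tt_period, hg.2]
      have hK2 : (∑ x ∈ Finset.Icc (1 : ℤ) (n : ℤ), (g2 x - x)) = k * n := by
        have : (∑ x ∈ Finset.Icc (1 : ℤ) (n : ℤ), (g2 x - x))
            = ∑ x ∈ Finset.Icc (1 : ℤ) (n : ℤ), (g (tt n i x) - x) := rfl
        rw [this, K_comp_tt hn2 i hg, hK]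
      have hinv : (invSet n g2).ncard < (invSet n g).ncard := inv_step hn2 hg hi1 hi2 hd
      have hlt : (invSet n g2).ncard < m := by omega
      have hih := ih _ hlt g2 hg2p hK2 rfl
      have hcy : cyc n g2 ≤ cyc n g + 1 := cyc_le hn2 hg i
      omega
    · push_neg at hdes
      have hno : ∀ i : ℤ, 1 ≤ i → i ≤ (n : ℤ) → ¬ g (i + 1) < g i := by
        intro i h1 h2
        exact not_lt.mpr (hdes i h1 h2)
      have hshift := mono_shift hn hg hno
      set c : ℤ := g 0 with hc
      have hcard : (Finset.Icc (1 : ℤ) (n : ℤ)).card = n := by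
        rw [Int.card_Icc]
        omega
      have hsum : (∑ x ∈ Finset.Icc (1 : ℤ) (n : ℤ), (g x - x)) = n * c := by
        have e : ∀ x ∈ Finset.Icc (1 : ℤ) (n : ℤ), g x - x = c := by
          intro x _; rw [hshift x]; ring
        rw [Finset.sum_congr rfl e, Finset.sum_const, hcard]
        simp [nsmul_eq_mul]
      rw [hsum] at hK
      have hn0 : (n : ℤ) ≠ 0 := by exact_mod_cast (by omega : n ≠ 0)
      have hck : c = k := by
        have : (n : ℤ) * c = (n : ℤ) * k := by linarith [hK, mul_comm k (n : ℤ)]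
        exact mul_left_cancel₀ hn0 this
      have hcyce : cyc n g = Int.gcd c (n : ℤ) := cyc_shift hn c (fun x => hshift x)
      rw [hcyce, hck]
      exact Nat.le_add_left _ _

end Stmt9Aux


/-- For an affine permutation `g` of period `n` with `k(g) = k` having a single cycle
(i.e. `ℤ` itself is a cycle of `g`), the length satisfies `ℓ(g) ≥ gcd(k, n) - 1`. -/
theorem stmt_9 (n : ℕ) (hn : 1 ≤ n) (g : ℤ → ℤ) (hg : IsAffinePerm n g)
    (k : ℤ) (hk : kOf n g = (k : ℚ))
    (hcyc : IsCycleOf n g Set.univ) :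
    Int.gcd k (n : ℤ) - 1 ≤ lenOf n g := by
  have hnQ : ((n : ℚ)) ≠ 0 := by
    have : n ≠ 0 := by omega
    exact_mod_cast this
  have hK : (∑ x ∈ Finset.Icc (1 : ℤ) (n : ℤ), (g x - x)) = k * n := by
    rw [kOf, div_eq_iff hnQ] at hk
    exact_mod_cast hk
  have h1 := Stmt9Aux.main hn k (Stmt9Aux.invSet n g).ncard g hg hK rfl
  have h2 : Stmt9Aux.cyc n g = 1 := Stmt9Aux.cyc_eq_one hcyc
  have h3 : lenOf n g = (Stmt9Aux.invSet n g).ncard := rfl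
  omega
end

section
/- For a finite vector configuration E = {e_1, ..., e_m} ⊂ ℤ², the area of the zonotope Z(E) = [0,e_1] + [0,e_2] + ... + [0,e_m] (Minkowski sum of segments) equals Σ_{1 ≤ i < j ≤ m} |det(e_i, e_j)|. -/
open Pointwise MeasureTheory

open Pointwise MeasureTheory in
/-- The segment `[0, v] = {t • v : t ∈ [0,1]}` in `ℝ²`. -/
def seg (v : ℝ × ℝ) : Set (ℝ × ℝ) := {x | ∃ t : ℝ, t ∈ Set.Icc (0 : ℝ) 1 ∧ x = t • v}

/-! ### Auxiliary lemmas -/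

lemma seg_eq_image (v : ℝ × ℝ) : seg v = (fun t : ℝ => t • v) '' Set.Icc 0 1 := by
  ext x; simp [seg, eq_comm]

lemma seg_eq_segment (v : ℝ × ℝ) : seg v = segment ℝ 0 v := by
  rw [segment_eq_image, seg_eq_image]; simp

lemma isCompact_seg (v : ℝ × ℝ) : IsCompact (seg v) := by
  rw [seg_eq_image]
  exact isCompact_Icc.image (continuous_id.smul continuous_const)

lemma convex_seg (v : ℝ × ℝ) : Convex ℝ (seg v) := by
  rw [seg_eq_segment]; exact convex_segment 0 v

lemma seg_zero : seg 0 = 0 := by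
  ext x; simp [seg]
  exact fun h => ⟨0, by norm_num, by simp [h]⟩

lemma mul_image (c : ℝ) : (fun t : ℝ => t * c) '' Set.Icc 0 1 = Set.uIcc 0 c := by
  rw [← segment_eq_uIcc, segment_eq_image]; simp [smul_eq_mul]

lemma fst_seg (v : ℝ × ℝ) : Prod.fst '' seg v = Set.uIcc 0 v.1 := by
  rw [seg_eq_image, ← mul_image v.1, ← Set.image_comp]
  rfl

lemma uIcc_eq (c : ℝ) : Set.uIcc 0 c = Set.Icc (min 0 c) (max 0 c) := rfl

lemma sum_uIcc (m : ℕ) (a : Fin m → ℝ) :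
    (∑ i : Fin m, Set.uIcc (0:ℝ) (a i)) = Set.Icc (∑ i, min 0 (a i)) (∑ i, max 0 (a i)) := by
  induction m with
  | zero => simp [← Set.singleton_zero]
  | succ n ih =>
      rw [Fin.sum_univ_castSucc, ih, uIcc_eq,
        Set.Icc_add_Icc (Finset.sum_le_sum fun i _ => min_le_max) min_le_max,
        Fin.sum_univ_castSucc (f := fun i => min 0 (a i)),
        Fin.sum_univ_castSucc (f := fun i => max 0 (a i))]

lemma volume_sum_uIcc (m : ℕ) (a : Fin m → ℝ) :
    volume (∑ i : Fin m, Set.uIcc (0:ℝ) (a i)) = ENNReal.ofReal (∑ i, |a i|) := by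
  rw [sum_uIcc, Real.volume_Icc, ← Finset.sum_sub_distrib]
  congr 1
  exact Finset.sum_congr rfl fun i _ => by
    rw [max_sub_min_eq_abs]; simp

lemma key1d (S : Set ℝ) (hS : IsCompact S) (hconv : Convex ℝ S) (hne : S.Nonempty) (c : ℝ) :
    volume (S + Set.uIcc 0 c) = volume S + ENNReal.ofReal |c| := by
  have h := eq_Icc_of_connected_compact ⟨hne, hconv.isPreconnected⟩ hS
  have hAB : sInf S ≤ sSup S := by
    obtain ⟨x, hx⟩ := hne
    rw [h] at hx; exact le_trans hx.1 hx.2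
  rw [h, uIcc_eq, Set.Icc_add_Icc hAB min_le_max, Real.volume_Icc, Real.volume_Icc,
    ← ENNReal.ofReal_add (by linarith) (abs_nonneg c)]
  congr 1
  have : max 0 c - min 0 c = |c| := by rw [max_sub_min_eq_abs]; simp
  linarith

/-! ### Slices -/

def vslice (s : Set (ℝ × ℝ)) (x : ℝ) : Set ℝ := {y | (x, y) ∈ s}

lemma isCompact_vslice {K : Set (ℝ × ℝ)} (hK : IsCompact K) (x : ℝ) :
    IsCompact (vslice K x) := by
  have h : vslice K x = Prod.snd '' (K ∩ Prod.fst ⁻¹' {x}) := by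
    ext y
    constructor
    · exact fun hy => ⟨(x, y), ⟨hy, rfl⟩, rfl⟩
    · rintro ⟨⟨a, b⟩, ⟨hab, ha⟩, rfl⟩
      simp only [Set.mem_preimage, Set.mem_singleton_iff] at ha
      simpa [vslice, ← ha] using hab
  rw [h]
  exact ((hK.inter_right ((isClosed_singleton).preimage continuous_fst)).image continuous_snd)

lemma convex_vslice {K : Set (ℝ × ℝ)} (hK : Convex ℝ K) (x : ℝ) :
    Convex ℝ (vslice K x) := by
  intro y1 h1 y2 h2 a b ha hb hab
  have h := hK h1 h2 ha hb hab
  have he : a • ((x, y1) : ℝ × ℝ) + b • (x, y2) = (x, a • y1 + b • y2) := by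
    simp [Prod.ext_iff, smul_eq_mul, ← add_mul, hab]
  rwa [he] at h

lemma mem_fst_image {K : Set (ℝ × ℝ)} {x : ℝ} :
    x ∈ Prod.fst '' K ↔ (vslice K x).Nonempty := by
  constructor
  · rintro ⟨⟨a, b⟩, hab, rfl⟩; exact ⟨b, hab⟩
  · rintro ⟨y, hy⟩; exact ⟨(x, y), hy, rfl⟩

lemma vslice_add_prod {K : Set (ℝ × ℝ)} {J : Set ℝ} (x : ℝ) :
    vslice (K + ({0} : Set ℝ) ×ˢ J) x = vslice K x + J := by
  ext y
  constructor
  · intro hy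
    obtain ⟨k, hk, s, hs, hks⟩ := Set.mem_add.1 hy
    obtain ⟨hs0, hsJ⟩ := hs
    simp only [Set.mem_singleton_iff] at hs0
    have h1 : k.1 = x := by
      have := congrArg Prod.fst hks; simpa [hs0] using this
    have h2 : k.2 + s.2 = y := congrArg Prod.snd hks
    exact Set.mem_add.2 ⟨k.2, by simpa [vslice, ← h1] using hk, s.2, hsJ, h2⟩
  · intro hy
    obtain ⟨z, hz, j, hj, hzj⟩ := Set.mem_add.1 hy
    exact Set.mem_add.2 ⟨(x, z), hz, (0, j), ⟨rfl, hj⟩, by simp [Prod.ext_iff, hzj]⟩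

lemma seg_vert (c : ℝ) : seg (0, c) = ({0} : Set ℝ) ×ˢ Set.uIcc 0 c := by
  have h1 : (fun t : ℝ => t * c) '' Set.Icc 0 1 = Set.uIcc 0 c := mul_image c
  ext ⟨a, b⟩
  simp only [seg, Set.mem_setOf_eq, Set.mem_prod, Set.mem_singleton_iff, ← h1, Set.mem_image,
    Prod.ext_iff, Prod.smul_mk, smul_eq_mul, mul_zero]
  constructor
  · rintro ⟨t, ht, rfl, rfl⟩; exact ⟨rfl, t, ht, rfl⟩
  · rintro ⟨rfl, t, ht, rfl⟩; exact ⟨t, ht, rfl, rfl⟩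

/-! ### The key geometric step: adding a vertical segment -/

lemma volume_add_vseg (K : Set (ℝ × ℝ)) (hK : IsCompact K) (hconv : Convex ℝ K) (c : ℝ) :
    volume (K + seg (0, c)) =
      volume K + ENNReal.ofReal |c| * volume (Prod.fst '' K) := by
  have hmeasK : MeasurableSet K := hK.isClosed.measurableSet
  have hmeas : MeasurableSet (K + seg (0, c)) :=
    (hK.add (isCompact_seg _)).isClosed.measurableSet
  have hfst : MeasurableSet (Prod.fst '' K) :=
    (hK.image continuous_fst).isClosed.measurableSet
  rw [Measure.volume_eq_prod, Measure.prod_apply hmeas]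
  have hslice : ∀ x : ℝ, volume (Prod.mk x ⁻¹' (K + seg (0, c))) =
      volume (vslice K x) + Set.indicator (Prod.fst '' K) (fun _ => ENNReal.ofReal |c|) x := by
    intro x
    have h1 : Prod.mk x ⁻¹' (K + seg (0, c)) = vslice K x + Set.uIcc 0 c := by
      rw [seg_vert]; exact vslice_add_prod x
    rw [h1]
    by_cases hx : x ∈ Prod.fst '' K
    · rw [Set.indicator_of_mem hx]
      exact key1d _ (isCompact_vslice hK x) (convex_vslice hconv x) (mem_fst_image.1 hx) c
    · rw [Set.indicator_of_notMem hx]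
      have he : vslice K x = ∅ :=
        Set.not_nonempty_iff_eq_empty.1 (fun h => hx (mem_fst_image.2 h))
      simp [he]
  have hm : Measurable fun x : ℝ => volume (vslice K x) :=
    measurable_measure_prodMk_left (ν := volume) hmeasK
  rw [lintegral_congr hslice, lintegral_add_left hm]
  congr 1
  · exact (Measure.prod_apply hmeasK).symm
  · rw [lintegral_indicator hfst, setLIntegral_const]

/-! ### Linear maps of determinant ±1 -/

noncomputable def shear (r : ℝ) : (ℝ × ℝ) →ₗ[ℝ] (ℝ × ℝ) where
  toFun z := (z.1 - r * z.2, z.2)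
  map_add' x y := by simp [Prod.ext_iff]; ring
  map_smul' a x := by simp [Prod.ext_iff]; ring

noncomputable def swapL : (ℝ × ℝ) →ₗ[ℝ] (ℝ × ℝ) where
  toFun z := (z.2, z.1)
  map_add' x y := by simp [Prod.ext_iff]
  map_smul' a x := by simp [Prod.ext_iff]

lemma shear_det (r : ℝ) : LinearMap.det (shear r) = 1 := by
  rw [← LinearMap.det_toMatrix (Module.Basis.finTwoProd ℝ), Matrix.det_fin_two]
  simp [LinearMap.toMatrix_apply, Module.Basis.finTwoProd_zero, Module.Basis.finTwoProd_one,
    Module.Basis.coe_finTwoProd_repr, shear]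

lemma swapL_det : LinearMap.det swapL = -1 := by
  rw [← LinearMap.det_toMatrix (Module.Basis.finTwoProd ℝ), Matrix.det_fin_two]
  simp [LinearMap.toMatrix_apply, Module.Basis.finTwoProd_zero, Module.Basis.finTwoProd_one,
    Module.Basis.coe_finTwoProd_repr, swapL]

lemma volume_image_det_one (f : (ℝ × ℝ) →ₗ[ℝ] (ℝ × ℝ)) (h : |LinearMap.det f| = 1)
    (s : Set (ℝ × ℝ)) : volume (f '' s) = volume s := by
  rw [Measure.addHaar_image_linearMap, h]; simp

lemma exists_normalizer (u : ℝ × ℝ) (hu : u ≠ 0) :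
    ∃ (f : (ℝ × ℝ) →ₗ[ℝ] (ℝ × ℝ)) (c : ℝ), |LinearMap.det f| = 1 ∧ f u = (0, c) ∧
      ∀ z : ℝ × ℝ, |(f z).1| * |c| = |z.1 * u.2 - z.2 * u.1| := by
  by_cases hq : u.2 = 0
  · have hp : u.1 ≠ 0 := fun h => hu (Prod.ext h hq)
    refine ⟨swapL, u.1, by rw [swapL_det]; norm_num, ?_, ?_⟩
    · show ((u.2, u.1) : ℝ × ℝ) = (0, u.1)
      rw [hq]
    · intro z
      show |z.2| * |u.1| = _
      rw [hq, ← abs_mul]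
      rw [mul_zero, zero_sub, abs_neg]
  · refine ⟨shear (u.1 / u.2), u.2, by rw [shear_det]; norm_num, ?_, ?_⟩
    · show ((u.1 - u.1 / u.2 * u.2, u.2) : ℝ × ℝ) = (0, u.2)
      have : u.1 - u.1 / u.2 * u.2 = 0 := by field_simp; ring
      rw [this]
    · intro z
      show |z.1 - u.1 / u.2 * z.2| * |u.2| = _
      rw [← abs_mul]
      congr 1
      field_simp

/-! ### Images and sums of sets -/

lemma image_sum_sets {F M N : Type*} [AddCommMonoid M] [AddCommMonoid N] [FunLike F M N]
    [AddMonoidHomClass F M N] (f : F) (m : ℕ) (s : Fin m → Set M) :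
    ⇑f '' (∑ i, s i) = ∑ i, ⇑f '' s i := by
  induction m with
  | zero => simp [← Set.singleton_zero]
  | succ n ih =>
      rw [Fin.sum_univ_castSucc, Fin.sum_univ_castSucc (f := fun i => ⇑f '' s i),
        Set.image_add f, ih]

lemma image_seg (f : (ℝ × ℝ) →ₗ[ℝ] (ℝ × ℝ)) (v : ℝ × ℝ) : ⇑f '' seg v = seg (f v) := by
  ext x
  simp only [seg, Set.mem_image, Set.mem_setOf_eq]
  constructor
  · rintro ⟨y, ⟨t, ht, rfl⟩, rfl⟩; exact ⟨t, ht, (map_smul f t v).symm ▸ rfl⟩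
  · rintro ⟨t, ht, rfl⟩; exact ⟨t • v, ⟨t, ht, rfl⟩, map_smul f t v⟩

lemma isCompact_zono : ∀ (m : ℕ) (v : Fin m → ℝ × ℝ), IsCompact (∑ i, seg (v i)) := by
  intro m
  induction m with
  | zero => intro v; simpa [← Set.singleton_zero] using isCompact_singleton
  | succ n ih =>
      intro v
      rw [Fin.sum_univ_castSucc]
      exact (ih _).add (isCompact_seg _)

lemma convex_zono : ∀ (m : ℕ) (v : Fin m → ℝ × ℝ), Convex ℝ (∑ i, seg (v i)) := by
  intro m
  induction m with
  | zero => intro v; simpa [← Set.singleton_zero] using convex_singleton (0 : ℝ × ℝ)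
  | succ n ih =>
      intro v
      rw [Fin.sum_univ_castSucc]
      exact (ih _).add (convex_seg _)

/-! ### Combinatorics of pairs -/

lemma pair_split (m : ℕ) (g : Fin (m + 1) → Fin (m + 1) → ℝ) :
    ∑ p ∈ Finset.univ.filter (fun p : Fin (m + 1) × Fin (m + 1) => p.1 < p.2), g p.1 p.2 =
      (∑ p ∈ Finset.univ.filter (fun p : Fin m × Fin m => p.1 < p.2),
        g p.1.castSucc p.2.castSucc) + ∑ i : Fin m, g i.castSucc (Fin.last m) := by
  rw [Finset.sum_filter, Finset.sum_filter, Fintype.sum_prod_type, Fintype.sum_prod_type]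
  rw [Fin.sum_univ_castSucc (f := fun i => ∑ j, if i < j then g i j else 0)]
  have hlast : (∑ j, if Fin.last m < j then g (Fin.last m) j else 0) = 0 :=
    Finset.sum_eq_zero fun j _ => by simp [not_lt.mpr (Fin.le_last j)]
  rw [hlast, add_zero, ← Finset.sum_add_distrib]
  refine Finset.sum_congr rfl fun i _ => ?_
  rw [Fin.sum_univ_castSucc (f := fun j => if i.castSucc < j then g i.castSucc j else 0)]
  simp [Fin.castSucc_lt_castSucc_iff, Fin.castSucc_lt_last]

/-! ### The main real-vector version -/

lemma zono_vol : ∀ (m : ℕ) (v : Fin m → ℝ × ℝ),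
    volume (∑ i, seg (v i)) =
      ENNReal.ofReal (∑ p ∈ Finset.univ.filter (fun p : Fin m × Fin m => p.1 < p.2),
        |(v p.1).1 * (v p.2).2 - (v p.1).2 * (v p.2).1|) := by
  intro m
  induction m with
  | zero =>
      intro v
      have h0 : ({0} : Set (ℝ × ℝ)) = ({0} : Set ℝ) ×ˢ ({0} : Set ℝ) := by
        rw [Set.singleton_prod_singleton]; rfl
      simp only [Finset.univ_eq_empty, Finset.sum_empty, ← Set.singleton_zero]
      rw [h0, Measure.volume_eq_prod, Measure.prod_prod]
      simp
  | succ n ih =>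
      intro v
      have hsplit := pair_split n (fun i j => |(v i).1 * (v j).2 - (v i).2 * (v j).1|)
      rw [Fin.sum_univ_castSucc (f := fun i => seg (v i)), hsplit]
      set w : Fin n → ℝ × ℝ := fun i => v i.castSucc with hw
      set u := v (Fin.last n) with hu
      set K := ∑ i : Fin n, seg (w i) with hK
      have hnonneg1 : (0:ℝ) ≤ ∑ p ∈ Finset.univ.filter (fun p : Fin n × Fin n => p.1 < p.2),
          |(w p.1).1 * (w p.2).2 - (w p.1).2 * (w p.2).1| :=
        Finset.sum_nonneg fun p _ => abs_nonneg _
      by_cases hu0 : u = 0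
      · rw [hu0, seg_zero, add_zero, ih w]
        congr 1
        simp [hw, Prod.fst_zero, Prod.snd_zero]
      · obtain ⟨f, c, hdet, hfu, habs⟩ := exists_normalizer u hu0
        have hKcomp : IsCompact K := isCompact_zono n w
        have hfK : ⇑f '' K = ∑ i : Fin n, seg (f (w i)) := by
          rw [hK, image_sum_sets]
          exact Finset.sum_congr rfl fun i _ => image_seg f (w i)
        have hK'comp : IsCompact (∑ i : Fin n, seg (f (w i))) := isCompact_zono n _
        have hK'conv : Convex ℝ (∑ i : Fin n, seg (f (w i))) := convex_zono n _
        have h1 : volume (K + seg u) = volume ((∑ i : Fin n, seg (f (w i))) + seg (0, c)) := by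
          rw [← volume_image_det_one f hdet (K + seg u), Set.image_add f, hfK, image_seg, hfu]
        have hfstK' : Prod.fst '' (∑ i : Fin n, seg (f (w i)))
            = ∑ i : Fin n, Set.uIcc (0:ℝ) ((f (w i)).1) := by
          rw [show (Prod.fst : ℝ × ℝ → ℝ) = ⇑(AddMonoidHom.fst ℝ ℝ) from rfl, image_sum_sets]
          exact Finset.sum_congr rfl fun i _ => fst_seg (f (w i))
        have hvolK' : volume (∑ i : Fin n, seg (f (w i))) = volume K := by
          rw [← hfK, volume_image_det_one f hdet K]
        have hmul : |c| * (∑ i : Fin n, |(f (w i)).1|)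
            = ∑ i : Fin n, |(w i).1 * u.2 - (w i).2 * u.1| := by
          rw [Finset.mul_sum]
          exact Finset.sum_congr rfl fun i _ => by rw [mul_comm, habs]
        have hnonneg2 : (0:ℝ) ≤ ∑ i : Fin n, |(w i).1 * u.2 - (w i).2 * u.1| :=
          Finset.sum_nonneg fun i _ => abs_nonneg _
        rw [h1, volume_add_vseg _ hK'comp hK'conv, hvolK', hfstK', volume_sum_uIcc, ih w,
          ← ENNReal.ofReal_mul (abs_nonneg c), hmul, ← ENNReal.ofReal_add hnonneg1 hnonneg2]

/-- The area of the zonotope `Z(E) = [0,e_1] + ⋯ + [0,e_m]` (Minkowski sum of segments)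
equals `∑_{i<j} |det(e_i, e_j)|`. -/
theorem stmt_12 (m : ℕ) (e : Fin m → ℤ × ℤ) :
    volume (∑ i : Fin m, seg (((e i).1 : ℝ), ((e i).2 : ℝ))) =
      ENNReal.ofReal
        (((∑ p ∈ Finset.univ.filter (fun p : Fin m × Fin m => p.1 < p.2),
            |(e p.1).1 * (e p.2).2 - (e p.1).2 * (e p.2).1| : ℤ) : ℝ)) := by
  rw [zono_vol m (fun i => (((e i).1 : ℝ), ((e i).2 : ℝ)))]
  congr 1
  push_cast
  rfl
end

section
/- Let f be an affine permutation of period n, and consider the linear ODE system ∂x_i(t)/∂t = x_{f(i)}(t) − x_i(t) for i ∈ ℤ with the constraint x_{i+n}(t) = x_i(t) + 1. If f has a single cycle C with n_f(C) = n and k_f(C) = k, then every solution satisfies x_i(t) = (k/n)·t + c_i + o(1) as t → ∞, for constants c_i; in particular ∂x_i/∂t → k/n for all i. -/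
open Filter Topology

-- shift by integer multiples of n
lemma aff_shift {n : ℕ} {f : ℤ → ℤ} (hf : IsAffinePerm n f) (i c : ℤ) :
    f (i + c * n) = f i + c * n := by
  induction c using Int.induction_on with
  | zero => simp
  | succ c ih =>
      have h2 : i + ((c : ℤ) + 1) * n = i + c * n + n := by ring
      rw [h2, hf.2, ih]; ring
  | pred c ih =>
      have := hf.2 (i + (-(c : ℤ) - 1) * n)
      have h2 : i + (-(c : ℤ) - 1) * n + n = i + -c * n := by ring
      rw [h2, ih] at this
      have h3 : f (i + (-(c:ℤ) - 1) * n) = f i + -c*n - n := by linarith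
      rw [h3]; ring

lemma aff_cancel {n : ℕ} {f : ℤ → ℤ} (hf : IsAffinePerm n f) {a b c : ℤ}
    (h : f a = f b + c * n) : a = b + c * n := by
  have : f a = f (b + c * n) := by rw [aff_shift hf b c, h]
  exact hf.1.1 this

lemma aff_iter_shift {n : ℕ} {f : ℤ → ℤ} (hf : IsAffinePerm n f) (j : ℕ) (i c : ℤ) :
    f^[j] (i + c * n) = f^[j] i + c * n := by
  induction j generalizing i with
  | zero => simp
  | succ j ih =>
      rw [Function.iterate_succ_apply, Function.iterate_succ_apply, aff_shift hf, ih]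

/-- canonical representative in [1, n] -/
def repI (n : ℕ) (m : ℤ) : ℤ := (m - 1) % (n : ℤ) + 1

lemma repI_mem {n : ℕ} (hn : 0 < n) (m : ℤ) : repI n m ∈ Finset.Icc (1 : ℤ) (n : ℤ) := by
  have h0 : (0:ℤ) < (n:ℤ) := by exact_mod_cast hn
  have h1 := Int.emod_nonneg (m - 1) (by positivity)
  have h2 := Int.emod_lt_of_pos (m - 1) h0
  simp only [Finset.mem_Icc, repI]; omega

lemma repI_congr {n : ℕ} {a b : ℤ} (h : (n : ℤ) ∣ a - b) : repI n a = repI n b := by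
  have : a ≡ b [ZMOD n] := (Int.modEq_iff_dvd.2 h).symm
  have h2 : a - 1 ≡ b - 1 [ZMOD n] := this.sub_right 1
  unfold repI; rw [Int.ModEq] at h2; rw [h2]

lemma repI_eq_self {n : ℕ} {m : ℤ} (h1 : 1 ≤ m) (h2 : m ≤ n) : repI n m = m := by
  unfold repI
  rw [Int.emod_eq_of_lt (by omega) (by omega)]; ring

lemma dvd_sub_repI (n : ℕ) (m : ℤ) : (n : ℤ) ∣ m - repI n m := by
  unfold repI
  have := Int.mul_ediv_add_emod (m - 1) (n : ℤ)
  exact ⟨(m - 1) / n, by omega⟩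

lemma iter_back {n : ℕ} {f : ℤ → ℤ} (hf : IsAffinePerm n f) (d : ℕ) :
    ∀ u v c : ℤ, f^[d] u = f^[d] v + c * n → u = v + c * n := by
  induction d with
  | zero => intro u v c h; simpa using h
  | succ d ih =>
      intro u v c h
      rw [Function.iterate_succ_apply', Function.iterate_succ_apply'] at h
      exact ih u v c (aff_cancel hf h)

lemma exists_period {n : ℕ} {f : ℤ → ℤ} (hn : 0 < n) (hf : IsAffinePerm n f) (i : ℤ) :
    ∃ p : ℕ, 0 < p ∧ p ≤ n ∧ ∃ c : ℤ, f^[p] i = i + c * n := by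
  have hcard : (Finset.Ico (0 : ℤ) (n : ℤ)).card < (Finset.range (n + 1)).card := by
    simp [Int.toNat_natCast]
  obtain ⟨a, ha, b, hb, hab, hg⟩ :=
    Finset.exists_ne_map_eq_of_card_lt_of_maps_to hcard
      (f := fun j => (f^[j] i) % (n : ℤ))
      (by
        intro j _
        have h0 : (0:ℤ) < (n:ℤ) := by exact_mod_cast hn
        exact Finset.mem_Ico.2 ⟨Int.emod_nonneg _ (by positivity), Int.emod_lt_of_pos _ h0⟩)
  -- wlog a < b
  have main : ∀ a b : ℕ, a < b → b < n + 1 → (f^[a] i) % (n:ℤ) = (f^[b] i) % (n:ℤ) →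
      ∃ p : ℕ, 0 < p ∧ p ≤ n ∧ ∃ c : ℤ, f^[p] i = i + c * n := by
    intro a b hlt hbn hmod
    have hdvd : (n : ℤ) ∣ f^[b] i - f^[a] i := (Int.ModEq.dvd hmod)
    obtain ⟨c, hc⟩ := hdvd
    have hb' : a + (b - a) = b := by omega
    have : f^[a] (f^[b - a] i) = f^[a] i + c * n := by
      rw [← Function.iterate_add_apply, hb']; linarith [hc]
    exact ⟨b - a, by omega, by omega, c, iter_back hf a _ _ _ this⟩
  rcases Nat.lt_trichotomy a b with h | h | h
  · exact main a b h (Finset.mem_range.1 hb) hg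
  · exact absurd h hab
  · exact main b a h (Finset.mem_range.1 ha) hg.symm

lemma orbit_univ {n : ℕ} {f : ℤ → ℤ} (hn : 0 < n) (hf : IsAffinePerm n f)
    (hcyc : IsCycleOf n f Set.univ) (i : ℤ) :
    ∀ m : ℤ, ∃ (j : ℕ) (c : ℤ), m = f^[j] i + c * n := by
  set C' : Set ℤ := {m | ∃ (j : ℕ) (c : ℤ), m = f^[j] i + c * n} with hC'
  have hclosed : IsClosedSet n f C' := by
    refine ⟨⟨i, 0, 0, by simp⟩, ?_, ?_⟩
    · intro m
      constructor
      · rintro ⟨j, c, rfl⟩; exact ⟨j, c + 1, by ring⟩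
      · rintro ⟨j, c, hm⟩; exact ⟨j, c - 1, by linarith [hm]⟩
    · intro m
      constructor
      · rintro ⟨j, c, rfl⟩
        exact ⟨j + 1, c, by rw [aff_shift hf, Function.iterate_succ_apply']⟩
      · rintro ⟨j, c, hm⟩
        cases j with
        | succ j =>
            rw [Function.iterate_succ_apply'] at hm
            exact ⟨j, c, aff_cancel hf hm⟩
        | zero =>
            simp only [Function.iterate_zero_apply] at hm
            obtain ⟨p, hp0, _, c0, hper⟩ := exists_period hn hf i
            obtain ⟨p', rfl⟩ : ∃ p', p = p' + 1 := ⟨p - 1, by omega⟩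
            rw [Function.iterate_succ_apply'] at hper
            have : f m = f (f^[p'] i) + (c - c0) * n := by
              have expand : (c - c0) * (n:ℤ) = c * n - c0 * n := by ring
              rw [expand]; linarith
            exact ⟨p', c - c0, aff_cancel hf this⟩
  have := hcyc.2 C' (Set.subset_univ _) hclosed
  intro m
  have hm : m ∈ C' := this ▸ Set.mem_univ m
  exact hm

lemma cycle_image {n : ℕ} {f : ℤ → ℤ} (hn : 0 < n) (hf : IsAffinePerm n f)
    (hcyc : IsCycleOf n f Set.univ) (i : ℤ) :
    (∀ a ∈ Finset.range n, ∀ b ∈ Finset.range n,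
        repI n (f^[a] i) = repI n (f^[b] i) → a = b) ∧
    (Finset.range n).image (fun j => repI n (f^[j] i)) = Finset.Icc (1 : ℤ) (n : ℤ) := by
  classical
  obtain ⟨p0, hp00, hp0n, c0, hc0⟩ := exists_period hn hf i
  have hPex : ∃ p : ℕ, 0 < p ∧ ∃ c : ℤ, f^[p] i = i + c * n := ⟨p0, hp00, c0, hc0⟩
  set p := Nat.find hPex with hpdef
  obtain ⟨hppos, cp, hcp⟩ := Nat.find_spec hPex
  have hpn : p ≤ n := Nat.find_min' hPex ⟨hp00, c0, hc0⟩ |>.trans hp0n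
  -- periodicity by multiples of p
  have hmul : ∀ q j : ℕ, ∃ c : ℤ, f^[j + q * p] i = f^[j] i + c * n := by
    intro q
    induction q with
    | zero => intro j; exact ⟨0, by simp⟩
    | succ q ih =>
        intro j
        obtain ⟨c, hc⟩ := ih j
        have harr : j + (q + 1) * p = (j + q * p) + p := by ring
        refine ⟨c + cp, ?_⟩
        rw [harr, Function.iterate_add_apply, hcp, aff_iter_shift hf _ i cp, hc]
        ring
  -- injectivity on range p
  have hinj : ∀ a b : ℕ, a < b → b < p → repI n (f^[a] i) ≠ repI n (f^[b] i) := by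
    intro a b hab hbp heq
    obtain ⟨c1, hc1⟩ := dvd_sub_repI n (f^[a] i)
    obtain ⟨c2, hc2⟩ := dvd_sub_repI n (f^[b] i)
    have hc : f^[b] i = f^[a] i + (c2 - c1) * n := by
      have : (c2 - c1) * (n:ℤ) = n * c2 - n * c1 := by ring
      rw [this]; rw [heq] at hc1; linarith
    have hb' : a + (b - a) = b := by omega
    have hstep : f^[a] (f^[b - a] i) = f^[a] i + (c2 - c1) * n := by
      rw [← Function.iterate_add_apply, hb']; exact hc
    have hP : 0 < b - a ∧ ∃ c : ℤ, f^[b - a] i = i + c * n :=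
      ⟨by omega, c2 - c1, iter_back hf a _ _ _ hstep⟩
    exact Nat.find_min hPex (by omega) hP
  -- coverage
  have hcov : ∀ m ∈ Finset.Icc (1:ℤ) (n:ℤ), ∃ j, j < p ∧ repI n (f^[j] i) = m := by
    intro m hm
    rw [Finset.mem_Icc] at hm
    obtain ⟨j, c, hj⟩ := orbit_univ hn hf hcyc i m
    obtain ⟨c2, hc2⟩ := hmul (j / p) (j % p)
    rw [Nat.mod_add_div' j p] at hc2
    refine ⟨j % p, Nat.mod_lt _ hppos, ?_⟩
    have hdvd : (n:ℤ) ∣ f^[j % p] i - m := by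
      refine ⟨-(c2 + c), ?_⟩
      rw [hj, hc2]; ring
    rw [repI_congr hdvd, repI_eq_self hm.1 hm.2]
  -- image over range p equals Icc 1 n
  have himg : (Finset.range p).image (fun j => repI n (f^[j] i)) = Finset.Icc (1:ℤ) (n:ℤ) := by
    apply Finset.Subset.antisymm
    · intro m hm
      obtain ⟨j, _, rfl⟩ := Finset.mem_image.1 hm
      exact repI_mem hn _
    · intro m hm
      obtain ⟨j, hjp, hj⟩ := hcov m hm
      exact Finset.mem_image.2 ⟨j, Finset.mem_range.2 hjp, hj⟩
  -- p = n by cardinality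
  have hinj' : ∀ a ∈ Finset.range p, ∀ b ∈ Finset.range p,
      repI n (f^[a] i) = repI n (f^[b] i) → a = b := by
    intro a ha b hb heq
    rcases Nat.lt_trichotomy a b with h | h | h
    · exact absurd heq (hinj a b h (Finset.mem_range.1 hb))
    · exact h
    · exact absurd heq.symm (hinj b a h (Finset.mem_range.1 ha))
  have hcard : ((Finset.range p).image (fun j => repI n (f^[j] i))).card = p := by
    rw [Finset.card_image_of_injOn (fun a ha b hb => hinj' a ha b hb), Finset.card_range]
  have hIcc : (Finset.Icc (1:ℤ) (n:ℤ)).card = n := by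
    rw [Int.card_Icc]; simp
  have hpn' : p = n := by
    have := hcard
    rw [himg, hIcc] at this
    omega
  rw [hpn'] at hinj' himg
  exact ⟨hinj', himg⟩

lemma orbit_sum {n : ℕ} {f : ℤ → ℤ} (hn : 0 < n) (hf : IsAffinePerm n f)
    (hcyc : IsCycleOf n f Set.univ) (i : ℤ) {M : Type*} [AddCommMonoid M] (g : ℤ → M)
    (hg : ∀ m c : ℤ, g (m + c * n) = g m) :
    ∑ j ∈ Finset.range n, g (f^[j] i) = ∑ m ∈ Finset.Icc (1 : ℤ) (n : ℤ), g m := by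
  obtain ⟨hinj, himg⟩ := cycle_image hn hf hcyc i
  have h1 : ∀ j : ℕ, g (f^[j] i) = g (repI n (f^[j] i)) := by
    intro j
    obtain ⟨c, hc⟩ := dvd_sub_repI n (f^[j] i)
    have h2 : f^[j] i = repI n (f^[j] i) + c * n := by linear_combination hc
    conv_lhs => rw [h2]
    rw [hg]
  calc ∑ j ∈ Finset.range n, g (f^[j] i)
      = ∑ j ∈ Finset.range n, g (repI n (f^[j] i)) :=
        Finset.sum_congr rfl (fun j _ => h1 j)
    _ = ∑ m ∈ (Finset.range n).image (fun j => repI n (f^[j] i)), g m :=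
        (Finset.sum_image (fun a ha b hb => hinj a ha b hb)).symm
    _ = ∑ m ∈ Finset.Icc (1 : ℤ) (n : ℤ), g m := by rw [himg]

lemma iter_n_eq {n : ℕ} {f : ℤ → ℤ} (hn : 0 < n) (hf : IsAffinePerm n f)
    (hcyc : IsCycleOf n f Set.univ) {k : ℤ}
    (hk : ∑ m ∈ Finset.Icc (1 : ℤ) (n : ℤ), (f m - m) = n * k) (i : ℤ) :
    f^[n] i = i + n * k := by
  have hg : ∀ m c : ℤ, (f (m + c * n) - (m + c * n)) = f m - m := by
    intro m c; rw [aff_shift hf]; ring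
  have h1 := orbit_sum hn hf hcyc i (fun m => f m - m) hg
  have h2 : ∑ j ∈ Finset.range n, (f (f^[j] i) - f^[j] i) = f^[n] i - i := by
    have := Finset.sum_range_sub (fun j => f^[j] i) n
    simp only [Function.iterate_succ_apply'] at this
    simpa using this
  rw [hk] at h1
  have := h2 ▸ h1  -- careful
  omega

noncomputable def zetaC (n : ℕ) : ℂ := Complex.exp (2 * Real.pi * Complex.I / n)

lemma zetaC_prim {n : ℕ} (hn : 0 < n) : IsPrimitiveRoot (zetaC n) n :=
  Complex.isPrimitiveRoot_exp n hn.ne'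

lemma zetaC_ne_zero (n : ℕ) : zetaC n ≠ 0 := Complex.exp_ne_zero _

lemma zetaC_zpow_eq_one {n : ℕ} (hn : 0 < n) (j : ℤ) :
    zetaC n ^ j = 1 ↔ (n : ℤ) ∣ j :=
  (zetaC_prim hn).zpow_eq_one_iff_dvd j

lemma zetaC_zpow_congr {n : ℕ} (hn : 0 < n) {a b : ℤ} (h : (n : ℤ) ∣ a - b) :
    zetaC n ^ a = zetaC n ^ b := by
  have h1 : zetaC n ^ (a - b) = 1 := (zetaC_zpow_eq_one hn _).2 h
  have : zetaC n ^ a = zetaC n ^ (b + (a - b)) := by ring_nf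
  rw [this, zpow_add₀ (zetaC_ne_zero n), h1, mul_one]

noncomputable def QC (n : ℕ) (j : ℤ) (t : ℝ) : ℂ :=
  (n : ℂ)⁻¹ * ∑ l ∈ Finset.range n,
    zetaC n ^ (-(j * l)) * Complex.exp (zetaC n ^ (l : ℕ) * t)

lemma QC_per {n : ℕ} (hn : 0 < n) (j : ℤ) (t : ℝ) : QC n (j + n) t = QC n j t := by
  unfold QC
  congr 1
  apply Finset.sum_congr rfl
  intro l _
  congr 1
  apply zetaC_zpow_congr hn
  refine ⟨-l, by push_cast; ring⟩

lemma QC_zero {n : ℕ} (hn : 0 < n) (j : ℤ) :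
    QC n j 0 = if (n : ℤ) ∣ j then 1 else 0 := by
  have hne : (n : ℂ) ≠ 0 := by exact_mod_cast hn.ne'
  have hterm : ∀ l : ℕ, zetaC n ^ (-(j * l)) * Complex.exp (zetaC n ^ (l:ℕ) * (0:ℝ)) =
      (zetaC n ^ (-j)) ^ l := by
    intro l
    rw [Complex.ofReal_zero, mul_zero, Complex.exp_zero, mul_one, ← zpow_natCast (zetaC n ^ (-j)) l,
      ← zpow_mul]
    ring_nf
  unfold QC
  simp only [hterm]
  by_cases h : (n : ℤ) ∣ j
  · have : zetaC n ^ (-j) = 1 := (zetaC_zpow_eq_one hn _).2 (dvd_neg.2 h)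
    rw [this]
    simp [hne, if_pos h]
  · have hω : zetaC n ^ (-j) ≠ 1 := by
      intro hc
      exact h (by simpa [dvd_neg] using (zetaC_zpow_eq_one hn (-j)).1 hc)
    rw [geom_sum_eq hω]
    have : (zetaC n ^ (-j)) ^ n = 1 := by
      rw [← zpow_natCast (zetaC n ^ (-j)) n, ← zpow_mul, mul_comm, zpow_mul,
        zpow_natCast (zetaC n) n, (zetaC_prim hn).pow_eq_one, one_zpow]
    rw [this]
    simp [if_neg h]

lemma cexp_deriv (z : ℂ) (t : ℝ) :
    HasDerivAt (fun s : ℝ => Complex.exp (z * s)) (z * Complex.exp (z * t)) t := by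
  have h : HasDerivAt (fun w : ℂ => Complex.exp (z * w)) (z * Complex.exp (z * t)) (t : ℂ) := by
    have h1 : HasDerivAt (fun w : ℂ => z * w) z (t : ℂ) := by
      simpa using (hasDerivAt_id (t : ℂ)).const_mul z
    have h2 := (Complex.hasDerivAt_exp (z * t)).comp (t : ℂ) h1
    exact h2.congr_deriv (mul_comm _ _)
  exact h.comp_ofReal

lemma QC_deriv {n : ℕ} (hn : 0 < n) (j : ℤ) (t : ℝ) :
    HasDerivAt (fun s => QC n j s) (QC n (j - 1) t) t := by
  unfold QC
  have h : ∀ l ∈ Finset.range n,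
      HasDerivAt (fun s : ℝ => zetaC n ^ (-(j * l)) * Complex.exp (zetaC n ^ (l : ℕ) * s))
        (zetaC n ^ (-((j - 1) * l)) * Complex.exp (zetaC n ^ (l : ℕ) * t)) t := by
    intro l _
    have h1 := (cexp_deriv (zetaC n ^ (l : ℕ)) t).const_mul (zetaC n ^ (-(j * l)))
    have harr : zetaC n ^ (-(j * l)) * (zetaC n ^ (l : ℕ) * Complex.exp (zetaC n ^ (l : ℕ) * t))
        = zetaC n ^ (-((j - 1) * l)) * Complex.exp (zetaC n ^ (l : ℕ) * t) := by
      rw [← mul_assoc]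
      congr 1
      rw [← zpow_natCast (zetaC n) l, ← zpow_add₀ (zetaC_ne_zero n)]
      congr 1
      ring
    rw [harr] at h1
    exact h1
  exact (HasDerivAt.fun_sum h).const_mul _

lemma cexp_shift_deriv (a : ℂ) (t : ℝ) :
    HasDerivAt (fun s : ℝ => Complex.exp ((s : ℂ) - a)) (Complex.exp ((t : ℂ) - a)) t := by
  have h : HasDerivAt (fun w : ℂ => Complex.exp (w - a)) (Complex.exp ((t : ℂ) - a)) (t : ℂ) := by
    have h1 : HasDerivAt (fun w : ℂ => w - a) 1 (t : ℂ) := (hasDerivAt_id _).sub_const a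
    exact ((Complex.hasDerivAt_exp ((t : ℂ) - a)).comp (t : ℂ) h1).congr_deriv (mul_one _)
  exact h.comp_ofReal

lemma main_formula {n : ℕ} {f : ℤ → ℤ} (hn : 0 < n)
    {W : ℝ → ℤ → ℝ}
    (hWn : ∀ (t : ℝ) (m : ℤ), W t (f^[n] m) = W t m)
    (hWode : ∀ (m : ℤ) (t : ℝ), HasDerivAt (fun s => W s m) (W t (f m) - W t m) t)
    (i : ℤ) (t : ℝ) :
    (W t i : ℂ) = Complex.exp (-(t : ℂ)) *
      ∑ j ∈ Finset.range n, QC n j t * (W 0 (f^[j] i) : ℂ) := by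
  set φ : ℝ → ℂ := fun s => Complex.exp ((s : ℂ) - t) *
    ∑ j ∈ Finset.range n, QC n (j : ℤ) (t - s) * (W s (f^[j] i) : ℂ) with hφ
  have hderiv : ∀ s : ℝ, HasDerivAt φ 0 s := by
    intro s
    -- derivative of the sum
    have hterm : ∀ j ∈ Finset.range n,
        HasDerivAt (fun s : ℝ => QC n (j : ℤ) (t - s) * (W s (f^[j] i) : ℂ))
          (-QC n ((j : ℤ) - 1) (t - s) * (W s (f^[j] i) : ℂ) +
            QC n (j : ℤ) (t - s) * ((W s (f^[j+1] i) : ℂ) - (W s (f^[j] i) : ℂ))) s := by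
      intro j _
      have hQ : HasDerivAt (fun s : ℝ => QC n (j : ℤ) (t - s)) (-QC n ((j : ℤ) - 1) (t - s)) s := by
        have h1 : HasDerivAt (fun s : ℝ => t - s) (-1) s := by
          simpa using (hasDerivAt_id s).const_sub t
        have h2 := (QC_deriv hn (j : ℤ) (t - s)).scomp s h1
        exact h2.congr_deriv (by simp)
      have hW : HasDerivAt (fun s : ℝ => (W s (f^[j] i) : ℂ))
          ((W s (f^[j+1] i) : ℂ) - (W s (f^[j] i) : ℂ)) s := by
        have h2 := hWode (f^[j] i) s
        rw [← Function.iterate_succ_apply' f j i] at h2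
        have := h2.ofReal_comp
        simpa using this
      exact hQ.fun_mul hW
    have hsum := HasDerivAt.fun_sum hterm
    have hexp : HasDerivAt (fun s : ℝ => Complex.exp ((s : ℂ) - t))
        (Complex.exp ((s : ℂ) - t)) s := cexp_shift_deriv t s
    have hprod := hexp.fun_mul hsum
    -- now show the total derivative is zero
    have hzero : Complex.exp ((s : ℂ) - t) *
          (∑ j ∈ Finset.range n, QC n (j : ℤ) (t - s) * (W s (f^[j] i) : ℂ)) +
        Complex.exp ((s : ℂ) - t) *
          (∑ j ∈ Finset.range n, (-QC n ((j : ℤ) - 1) (t - s) * (W s (f^[j] i) : ℂ) +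
            QC n (j : ℤ) (t - s) * ((W s (f^[j+1] i) : ℂ) - (W s (f^[j] i) : ℂ)))) = 0 := by
      rw [← mul_add]
      apply mul_eq_zero_of_right
      rw [← Finset.sum_add_distrib]
      have hsimp : ∀ j ∈ Finset.range n,
          QC n (j : ℤ) (t - s) * (W s (f^[j] i) : ℂ) +
            (-QC n ((j : ℤ) - 1) (t - s) * (W s (f^[j] i) : ℂ) +
            QC n (j : ℤ) (t - s) * ((W s (f^[j+1] i) : ℂ) - (W s (f^[j] i) : ℂ))) =
          QC n (j : ℤ) (t - s) * (W s (f^[j+1] i) : ℂ) -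
            QC n ((j : ℤ) - 1) (t - s) * (W s (f^[j] i) : ℂ) := by
        intro j _; ring
      rw [Finset.sum_congr rfl hsimp, Finset.sum_sub_distrib, sub_eq_zero]
      -- cyclic reindexing
      set G : ℕ → ℂ := fun j => QC n ((j : ℤ) - 1) (t - s) * (W s (f^[j] i) : ℂ) with hG
      have hL : ∀ j ∈ Finset.range n,
          QC n (j : ℤ) (t - s) * (W s (f^[j+1] i) : ℂ) = G (j + 1) := by
        intro j _
        have hcast : ((j : ℤ) + 1) - 1 = (j : ℤ) := by ring
        simp only [hG]
        push_cast
        rw [hcast]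
      rw [Finset.sum_congr rfl hL]
      have h1 : ∑ j ∈ Finset.range (n+1), G j
          = ∑ j ∈ Finset.range n, G (j + 1) + G 0 := Finset.sum_range_succ' G n
      have h2 : ∑ j ∈ Finset.range (n+1), G j
          = ∑ j ∈ Finset.range n, G j + G n := Finset.sum_range_succ G n
      have hGn : G n = G 0 := by
        simp only [hG, Function.iterate_zero_apply, hWn s i]
        congr 1
        have : ((n : ℤ) - 1) = -1 + n := by ring
        rw [this, QC_per hn (-1) (t - s)]
        norm_num
      rw [hGn] at h2
      exact add_right_cancel (h1.symm.trans h2)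
    exact hzero ▸ hprod
  have hconst : φ t = φ 0 := by
    have hdiff : Differentiable ℝ φ := fun s => (hderiv s).differentiableAt
    have hd0 : ∀ s, deriv φ s = 0 := fun s => (hderiv s).deriv
    exact is_const_of_deriv_eq_zero hdiff hd0 t 0
  have hφt : φ t = (W t i : ℂ) := by
    simp only [hφ]
    rw [sub_self, Complex.exp_zero, one_mul, sub_self]
    rw [Finset.sum_eq_single_of_mem 0 (Finset.mem_range.2 hn)]
    · rw [QC_zero hn]; simp
    · intro j hj hj0
      rw [QC_zero hn, if_neg, zero_mul]
      intro hd
      have hjpos : (0 : ℤ) < (j : ℤ) := by exact_mod_cast Nat.pos_of_ne_zero hj0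
      have hle := Int.le_of_dvd hjpos hd
      have hlt := Finset.mem_range.1 hj
      omega
  have hφ0 : φ 0 = Complex.exp (-(t : ℂ)) *
      ∑ j ∈ Finset.range n, QC n (j : ℤ) t * (W 0 (f^[j] i) : ℂ) := by
    simp only [hφ, sub_zero, Complex.ofReal_zero, zero_sub]
  rw [← hφt, hconst, hφ0]

lemma re_lt_one_of_ne_one {z : ℂ} (h1 : ‖z‖ = 1) (h2 : z ≠ 1) : z.re < 1 := by
  have hre : z.re ≤ 1 := h1 ▸ Complex.re_le_norm z
  rcases hre.lt_or_eq with h | h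
  · exact h
  · exfalso
    have hnsq : Complex.normSq z = 1 := by
      rw [← Complex.sq_norm, h1, one_pow]
    have him : z.im = 0 := by
      have := Complex.normSq_apply z
      nlinarith [this, hnsq, h]
    exact h2 (Complex.ext h him)

lemma zeta_pow_re_lt_one {n : ℕ} (hn : 0 < n) {l : ℕ} (hl : l ∈ Finset.Ico 1 n) :
    (zetaC n ^ l).re < 1 := by
  rw [Finset.mem_Ico] at hl
  apply re_lt_one_of_ne_one
  · rw [norm_pow]
    have : ‖zetaC n‖ = 1 := by
      unfold zetaC
      rw [Complex.norm_exp]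
      have : (2 * (Real.pi : ℂ) * Complex.I / n).re = 0 := by
        simp [Complex.div_re]
      rw [this, Real.exp_zero]
    rw [this, one_pow]
  · exact (zetaC_prim hn).pow_ne_one_of_pos_of_lt (by omega) hl.2

lemma cexp_tendsto_zero {z : ℂ} (hz : z.re < 0) :
    Tendsto (fun t : ℝ => Complex.exp (z * t)) atTop (𝓝 0) := by
  rw [tendsto_zero_iff_norm_tendsto_zero]
  have hnorm : ∀ t : ℝ, ‖Complex.exp (z * t)‖ = Real.exp (z.re * t) := by
    intro t
    rw [Complex.norm_exp]
    congr 1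
    simp [Complex.mul_re]
  simp only [hnorm]
  exact Real.tendsto_exp_atBot.comp ((tendsto_const_mul_atBot_of_neg hz).2 tendsto_id)

lemma cexp_integrableOn {z : ℂ} (hz : z.re < 0) :
    MeasureTheory.IntegrableOn (fun t : ℝ => Complex.exp (z * t)) (Set.Ioi (0:ℝ)) := by
  have hcont : Continuous fun t : ℝ => Complex.exp (z * t) := by
    exact Complex.continuous_exp.comp (by continuity)
  refine MeasureTheory.Integrable.mono' (exp_neg_integrableOn_Ioi 0 (neg_pos.2 hz))
    hcont.aestronglyMeasurable ?_
  filter_upwards with t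
  rw [Complex.norm_exp]
  have : (z * t).re = z.re * t := by simp [Complex.mul_re]
  rw [this]
  exact le_of_eq (by ring_nf)

lemma rep_formula {n : ℕ} {f : ℤ → ℤ} (hn : 0 < n)
    {W : ℝ → ℤ → ℝ}
    (hWn : ∀ (t : ℝ) (m : ℤ), W t (f^[n] m) = W t m)
    (hWode : ∀ (m : ℤ) (t : ℝ), HasDerivAt (fun s => W s m) (W t (f m) - W t m) t)
    (i : ℤ) (t : ℝ) :
    (W t i : ℂ) = (((∑ j ∈ Finset.range n, W 0 (f^[j] i)) / n : ℝ) : ℂ) +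
      ∑ l ∈ Finset.Ico 1 n,
        ((n : ℂ)⁻¹ * ∑ j ∈ Finset.range n,
            zetaC n ^ (-((j : ℤ) * (l : ℤ))) * (W 0 (f^[j] i) : ℂ)) *
          Complex.exp ((zetaC n ^ (l : ℕ) - 1) * t) := by
  have hexp_prod : ∀ z : ℂ, Complex.exp (-(t:ℂ)) * Complex.exp (z * t)
      = Complex.exp ((z - 1) * t) := by
    intro z; rw [← Complex.exp_add]; ring_nf
  rw [main_formula hn hWn hWode i t]
  unfold QC
  have hL : Complex.exp (-(t:ℂ)) * ∑ j ∈ Finset.range n,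
      ((n : ℂ)⁻¹ * ∑ l ∈ Finset.range n,
        zetaC n ^ (-((j : ℤ) * (l : ℤ))) * Complex.exp (zetaC n ^ (l:ℕ) * t)) * (W 0 (f^[j] i) : ℂ)
      = ∑ l ∈ Finset.range n,
        ((n : ℂ)⁻¹ * ∑ j ∈ Finset.range n,
            zetaC n ^ (-((j : ℤ) * (l : ℤ))) * (W 0 (f^[j] i) : ℂ)) *
          Complex.exp ((zetaC n ^ (l : ℕ) - 1) * t) := by
    rw [Finset.mul_sum]
    simp only [Finset.sum_mul, Finset.mul_sum]
    rw [Finset.sum_comm]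
    apply Finset.sum_congr rfl
    intro l _
    apply Finset.sum_congr rfl
    intro j _
    rw [← hexp_prod (zetaC n ^ (l:ℕ))]
    ring
  rw [hL]
  -- split off l = 0
  rw [Finset.range_eq_Ico, Finset.sum_eq_sum_Ico_succ_bot hn]
  congr 1
  · -- the l = 0 term
    push_cast
    simp only [Nat.cast_zero, mul_zero, neg_zero, zpow_zero, one_mul, pow_zero,
      sub_self, zero_mul, Complex.exp_zero, mul_one]
    rw [Finset.sum_div]
    rw [Finset.mul_sum]
    apply Finset.sum_congr rfl
    intro j _
    rw [div_eq_inv_mul]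

lemma W_limits {n : ℕ} {f : ℤ → ℤ} (hn : 0 < n)
    {W : ℝ → ℤ → ℝ}
    (hWn : ∀ (t : ℝ) (m : ℤ), W t (f^[n] m) = W t m)
    (hWode : ∀ (m : ℤ) (t : ℝ), HasDerivAt (fun s => W s m) (W t (f m) - W t m) t)
    (i : ℤ) :
    Tendsto (fun t => W t i) atTop
      (𝓝 ((∑ j ∈ Finset.range n, W 0 (f^[j] i)) / n)) ∧
    MeasureTheory.IntegrableOn
      (fun t => W t i - (∑ j ∈ Finset.range n, W 0 (f^[j] i)) / n) (Set.Ioi (0:ℝ)) := by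
  set S : ℝ := ∑ j ∈ Finset.range n, W 0 (f^[j] i) with hS
  set R : ℝ → ℂ := fun t => ∑ l ∈ Finset.Ico 1 n,
      ((n : ℂ)⁻¹ * ∑ j ∈ Finset.range n,
          zetaC n ^ (-((j : ℤ) * (l : ℤ))) * (W 0 (f^[j] i) : ℂ)) *
        Complex.exp ((zetaC n ^ (l : ℕ) - 1) * t) with hR
  have hrep : ∀ t : ℝ, W t i = S / n + (R t).re := by
    intro t
    have h1 := congrArg Complex.re (rep_formula hn hWn hWode i t)
    simpa only [Complex.add_re, Complex.ofReal_re] using h1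
  have hres : ∀ l ∈ Finset.Ico 1 n, (zetaC n ^ (l : ℕ) - 1).re < 0 := by
    intro l hl
    have := zeta_pow_re_lt_one hn hl
    simp only [Complex.sub_re, Complex.one_re]
    linarith
  constructor
  · have hR0 : Tendsto R atTop (𝓝 0) := by
      have h0 : (0 : ℂ) = ∑ l ∈ Finset.Ico 1 n, (0 : ℂ) := by simp
      rw [h0, hR]
      apply tendsto_finset_sum
      intro l hl
      simpa using (cexp_tendsto_zero (hres l hl)).const_mul
        ((n : ℂ)⁻¹ * ∑ j ∈ Finset.range n,
          zetaC n ^ (-((j : ℤ) * (l : ℤ))) * (W 0 (f^[j] i) : ℂ))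
    have hre0 : Tendsto (fun t => (R t).re) atTop (𝓝 0) := by
      have := (Complex.continuous_re.tendsto (0 : ℂ)).comp hR0
      exact this
    have := tendsto_const_nhds (α := ℝ) (x := S / n) (f := atTop).add hre0
    rw [add_zero] at this
    exact this.congr (fun t => (hrep t).symm)
  · have hRInt : MeasureTheory.IntegrableOn R (Set.Ioi (0:ℝ)) := by
      apply MeasureTheory.integrable_finset_sum
      intro l hl
      exact (cexp_integrableOn (hres l hl)).const_mul _
    have := Complex.reCLM.integrable_comp hRInt
    apply this.congr
    filter_upwards with t
    have := hrep t
    simp only [Complex.reCLM_apply]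
    linarith

/-- Consider the ODE system `x_i' (t) = x_{f i}(t) - x_i(t)` with `x_{i+n} = x_i + 1`,
for an affine permutation `f` of period `n` with a single cycle (so `n_f(C) = n`) and
`k(f) = k`. Then every solution satisfies `x_i(t) = (k/n)·t + c_i + o(1)` as `t → ∞`;
in particular `x_i'(t) = x_{f i}(t) - x_i(t) → k/n`. -/
theorem stmt_16 (n : ℕ) (hn : 1 ≤ n) (f : ℤ → ℤ) (hf : IsAffinePerm n f)
    (k : ℤ) (hk : kOf n f = (k : ℚ))
    (hcyc : IsCycleOf n f Set.univ)
    (x : ℝ → ℤ → ℝ)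
    (hper : ∀ t : ℝ, ∀ i : ℤ, x t (i + n) = x t i + 1)
    (hode : ∀ i : ℤ, ∀ t : ℝ, HasDerivAt (fun s => x s i) (x t (f i) - x t i) t) :
    ∀ i : ℤ,
      (∃ c : ℝ, Tendsto (fun t => x t i - ((k : ℝ) / (n : ℝ)) * t) atTop (𝓝 c)) ∧
      Tendsto (fun t => x t (f i) - x t i) atTop (𝓝 ((k : ℝ) / (n : ℝ))) := by
  intro i
  have hn0 : 0 < n := hn
  have hksum : ∑ m ∈ Finset.Icc (1:ℤ) (n:ℤ), (f m - m) = n * k := by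
    unfold kOf at hk
    have hnq : ((n:ℚ)) ≠ 0 := by positivity
    rw [div_eq_iff hnq] at hk
    have h2 : ((∑ m ∈ Finset.Icc (1:ℤ) (n:ℤ), (f m - m) : ℤ) : ℚ) = ((n : ℚ)) * k := by
      rw [hk]; ring
    exact_mod_cast h2
  have hfn := iter_n_eq hn0 hf hcyc hksum
  have xshift : ∀ (t : ℝ) (m c : ℤ), x t (m + c * n) = x t m + c := by
    intro t m c
    induction c using Int.induction_on with
    | zero => simp
    | succ c ih =>
        have harr : m + ((c:ℤ) + 1) * n = (m + c * n) + n := by ring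
        rw [harr, hper t, ih]; push_cast; ring
    | pred c ih =>
        have h1 := hper t (m + (-(c:ℤ) - 1) * n)
        have harr : m + (-(c:ℤ) - 1) * n + n = m + -(c:ℤ) * n := by ring
        rw [harr, ih] at h1
        push_cast at h1 ⊢
        linarith
  set W : ℝ → ℤ → ℝ := fun t m => x t (f m) - x t m with hW
  have hWn : ∀ (t : ℝ) (m : ℤ), W t (f^[n] m) = W t m := by
    intro t m
    rw [hfn m]
    have h1 : m + (n:ℤ) * k = m + k * n := by ring
    simp only [hW]
    rw [h1, aff_shift hf m k, xshift, xshift]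
    ring
  have hWode : ∀ (m : ℤ) (t : ℝ), HasDerivAt (fun s => W s m) (W t (f m) - W t m) t := by
    intro m t
    have h := (hode (f m) t).fun_sub (hode m t)
    simp only [hW]
    exact h
  obtain ⟨htend, hint⟩ := W_limits hn0 hWn hWode i
  have hSsum : (∑ j ∈ Finset.range n, W 0 (f^[j] i)) = (k : ℝ) := by
    have htel := Finset.sum_range_sub (fun j => x 0 (f^[j] i)) n
    have heach : ∀ j ∈ Finset.range n, W 0 (f^[j] i)
        = x 0 (f^[j+1] i) - x 0 (f^[j] i) := by
      intro j _
      simp only [hW]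
      rw [Function.iterate_succ_apply']
    rw [Finset.sum_congr rfl heach, htel]
    simp only [Function.iterate_zero_apply]
    rw [hfn i, show i + (n:ℤ) * k = i + k * (n:ℤ) by ring, xshift]
    ring
  rw [hSsum] at htend hint
  have hxcont : ∀ m : ℤ, Continuous fun s => x s m := by
    intro m
    have hd : Differentiable ℝ fun s => x s m := fun t => (hode m t).differentiableAt
    exact hd.continuous
  constructor
  · set F : ℝ → ℝ := fun t => x t i - ((k:ℝ)/(n:ℝ)) * t with hF
    have hFder : ∀ t, HasDerivAt F (W t i - (k:ℝ)/(n:ℝ)) t := by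
      intro t
      have h2 : HasDerivAt (fun s : ℝ => ((k:ℝ)/(n:ℝ)) * s) ((k:ℝ)/(n:ℝ)) t := by
        simpa using (hasDerivAt_id t).const_mul ((k:ℝ)/(n:ℝ))
      exact (hode i t).fun_sub h2
    have hcont : Continuous fun t => W t i - (k:ℝ)/(n:ℝ) :=
      ((hxcont (f i)).sub (hxcont i)).sub continuous_const
    have hFTC : ∀ T : ℝ, ∫ s in (0:ℝ)..T, (W s i - (k:ℝ)/(n:ℝ)) = F T - F 0 := by
      intro T
      exact intervalIntegral.integral_eq_sub_of_hasDerivAt (fun s _ => hFder s)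
        (hcont.intervalIntegrable 0 T)
    have htendInt := MeasureTheory.intervalIntegral_tendsto_integral_Ioi 0 hint
      (tendsto_id (α := ℝ))
    refine ⟨F 0 + ∫ s in Set.Ioi (0:ℝ), (W s i - (k:ℝ)/(n:ℝ)), ?_⟩
    have hsum := (tendsto_const_nhds (x := F 0) (f := atTop (α := ℝ))).add htendInt
    apply hsum.congr
    intro T
    simp only [id_eq]
    rw [hFTC T]
    ring
  · exact htend
end
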